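/- arXiv:1608.02295 — 5 statements merged into one kernel-verified Lean document; each statement's English description precedes it below -/
import Mathlib

section
/- Let p be a prime and let w = (w_1, ..., w_l) be a vector in ℚ_p^l whose coordinates are algebraic over ℚ and linearly independent over ℚ. Then there exist constants c > 0 and L > 0 such that for every nonzero integer vector z = (z_1, ..., z_l) ∈ ℤ^l, the p-adic norm of the inner product ⟨z, w⟩ = Σ z_j w_j satisfies ‖⟨z, w⟩‖_p ≥ c ‖z‖^{-L}, where ‖z‖ denotes the supremum norm of z. -/
/-- For a nonzero integer, the p-adic norm is at least the inverse of the absolute value. -/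
lemma padic_int_norm_lower (p : ℕ) [hp : Fact p.Prime] (m : ℤ) (hm : m ≠ 0) :
    (|(m : ℝ)|)⁻¹ ≤ ‖(m : ℚ_[p])‖ := by
  have h1 : ‖(m : ℚ_[p])‖ = ((padicNorm p (m : ℚ) : ℚ) : ℝ) := by
    rw [← Rat.cast_intCast, Padic.eq_padicNorm]
  have hq : (m : ℚ) ≠ 0 := by exact_mod_cast hm
  have h2 : padicNorm p (m : ℚ) = (p : ℚ) ^ (-padicValRat p (m : ℚ)) :=
    padicNorm.eq_zpow_of_nonzero hq
  have h3 : padicValRat p (m : ℚ) = (padicValInt p m : ℤ) := padicValRat.of_int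
  set v : ℕ := padicValInt p m with hv
  have hdvd : (p : ℕ) ^ v ∣ m.natAbs := pow_padicValNat_dvd
  have hle : (p : ℕ) ^ v ≤ m.natAbs := Nat.le_of_dvd (Int.natAbs_pos.mpr hm) hdvd
  have hple : ((p : ℝ) ^ v) ≤ |(m : ℝ)| := by
    rw [← Int.cast_abs, Int.abs_eq_natAbs]
    exact_mod_cast hle
  have hnorm : ‖(m : ℚ_[p])‖ = ((p : ℝ) ^ v)⁻¹ := by
    rw [h1, h2, h3]
    push_cast
    rw [zpow_neg, zpow_natCast]
  rw [hnorm]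
  have hp0 : (0 : ℝ) < (p : ℝ) ^ v := by
    have := hp.out.pos; positivity
  exact inv_anti₀ hp0 hple

/-- Determinant bound via entrywise bound. -/
lemma abs_det_le_of_entries {d : ℕ} (M : Matrix (Fin d) (Fin d) ℝ) {C : ℝ} (hC : 0 ≤ C)
    (h : ∀ j k, |M j k| ≤ C) :
    |M.det| ≤ (Fintype.card (Equiv.Perm (Fin d)) : ℝ) * C ^ d := by
  rw [Matrix.det_apply]
  calc |∑ σ : Equiv.Perm (Fin d), Equiv.Perm.sign σ • ∏ i, M (σ i) i|
      ≤ ∑ σ : Equiv.Perm (Fin d), |Equiv.Perm.sign σ • ∏ i, M (σ i) i| :=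
        Finset.abs_sum_le_sum_abs _ _
    _ ≤ ∑ _σ : Equiv.Perm (Fin d), C ^ d := by
        apply Finset.sum_le_sum
        intro σ _
        have hsign : |(Equiv.Perm.sign σ : ℤ) • ∏ i, M (σ i) i| = |∏ i, M (σ i) i| := by
          rcases Int.units_eq_one_or (Equiv.Perm.sign σ) with h1 | h1 <;>
            simp [h1]
        rw [Units.smul_def] at *
        rw [hsign, Finset.abs_prod]
        calc ∏ i, |M (σ i) i| ≤ ∏ _i : Fin d, C :=
              Finset.prod_le_prod (fun i _ => abs_nonneg _) (fun i _ => h _ _)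
          _ = C ^ d := by simp
    _ = (Fintype.card (Equiv.Perm (Fin d)) : ℝ) * C ^ d := by
        rw [Finset.sum_const, nsmul_eq_mul]
        simp

set_option maxHeartbeats 1000000 in
/-- p-adic Diophantine property: if the coordinates of `w ∈ ℚ_p^l` are algebraic over `ℚ`
and linearly independent over `ℚ`, then there are `c > 0`, `L > 0` such that
`‖⟨z, w⟩‖_p ≥ c ‖z‖^{-L}` for all nonzero integer vectors `z`. -/
theorem stmt1 (p : ℕ) [Fact p.Prime] (l : ℕ) (w : Fin l → ℚ_[p])
    (halg : ∀ i, IsAlgebraic ℚ (w i)) (hli : LinearIndependent ℚ w) :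
    ∃ c > (0 : ℝ), ∃ L > (0 : ℝ), ∀ z : Fin l → ℤ, z ≠ 0 →
      c * ‖z‖ ^ (-L) ≤ ‖∑ i, (z i : ℚ_[p]) * w i‖ := by
  classical
  set K : IntermediateField ℚ ℚ_[p] := IntermediateField.adjoin ℚ (Set.range w) with hK
  have hrange : ∀ x ∈ Set.range w, IsIntegral ℚ x := by
    rintro x ⟨i, rfl⟩; exact (halg i).isIntegral
  haveI : Finite (Set.range w) := Set.finite_range w
  haveI : FiniteDimensional ℚ K := IntermediateField.finiteDimensional_adjoin hrange
  obtain ⟨d, hdde⟩ : ∃ n, Module.finrank ℚ K = n := ⟨_, rfl⟩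
  have hd1 : 0 < d := hdde ▸ Module.finrank_pos
  obtain ⟨b⟩ : Nonempty (Module.Basis (Fin d) ℚ K) := ⟨Module.finBasisOfFinrankEq ℚ K hdde⟩
  obtain ⟨w', hw'⟩ : ∃ w' : Fin l → K, ∀ i, K.val (w' i) = w i :=
    ⟨fun i => ⟨w i, IntermediateField.subset_adjoin ℚ _ (Set.mem_range_self i)⟩,
     fun i => rfl⟩
  obtain ⟨M, hM⟩ : ∃ M : Fin l → Matrix (Fin d) (Fin d) ℚ,
      ∀ i, M i = Algebra.leftMulMatrix b (w' i) := ⟨_, fun _ => rfl⟩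
  -- Common denominator
  obtain ⟨N, hN0, hNdvd⟩ : ∃ N : ℕ, 0 < N ∧ ∀ i j k, (M i j k).den ∣ N :=
    ⟨∏ x : Fin l × Fin d × Fin d, (M x.1 x.2.1 x.2.2).den,
     Finset.prod_pos (fun x _ => (M x.1 x.2.1 x.2.2).pos),
     fun i j k => Finset.dvd_prod_of_mem (fun x => (M x.1 x.2.1 x.2.2).den)
       (Finset.mem_univ (i, j, k))⟩
  -- Integer matrices
  obtain ⟨B, hB⟩ : ∃ B : Fin l → Matrix (Fin d) (Fin d) ℤ,
      ∀ i j k, ((B i j k : ℚ)) = (N : ℚ) * M i j k := by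
    refine ⟨fun i => Matrix.of fun j k => ((N : ℚ) * M i j k).num, ?_⟩
    intro i j k
    obtain ⟨m, hm⟩ := hNdvd i j k
    have hden : ((M i j k).den : ℚ) ≠ 0 := by exact_mod_cast (M i j k).den_ne_zero
    have hq : ((M i j k).num : ℚ) / ((M i j k).den : ℚ) = M i j k := Rat.num_div_den _
    have h1 : ((M i j k).num : ℚ) = (M i j k) * ((M i j k).den : ℚ) :=
      (div_eq_iff hden).mp hq
    have hkey : (N : ℚ) * M i j k = ((m * (M i j k).num : ℤ) : ℚ) := by
      rw [hm]
      push_cast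
      rw [h1]
      ring
    show (((N : ℚ) * M i j k).num : ℚ) = (N : ℚ) * M i j k
    rw [hkey, Rat.num_intCast]
  -- entry bound for the integer matrices
  obtain ⟨E0, hE0⟩ := Finite.exists_le fun x : Fin l × Fin d × Fin d =>
    |(B x.1 x.2.1 x.2.2 : ℝ)|
  set E : ℝ := max E0 0 with hEdef
  have hE : ∀ i j k, |(B i j k : ℝ)| ≤ E := fun i j k =>
    (hE0 (i, j, k)).trans (le_max_left _ _)
  have hEnn : 0 ≤ E := le_max_right _ _
  set F : ℝ := l * E + 1 with hFdef
  have hF0 : 0 < F := by positivity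
  set C1 : ℝ := (Fintype.card (Equiv.Perm (Fin d)) : ℝ) * F ^ d with hC1def
  have hC10 : 0 < C1 := by
    have : 0 < (Fintype.card (Equiv.Perm (Fin d)) : ℝ) := by
      exact_mod_cast Fintype.card_pos
    positivity
  set W : ℝ := max 1 (∑ i, ‖w i‖) with hWdef
  have hW1 : 1 ≤ W := le_max_left _ _
  have hW0 : 0 < W := lt_of_lt_of_le one_pos hW1
  set C2 : ℝ := (d : ℝ) * W ^ d with hC2def
  have hC20 : 0 < C2 := by
    have : 0 < (d : ℝ) := by exact_mod_cast hd1
    positivity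
  refine ⟨(C1 * C2)⁻¹, by positivity, (d : ℝ), by exact_mod_cast hd1, ?_⟩
  intro z hz
  set αp : ℚ_[p] := ∑ i, (z i : ℚ_[p]) * w i with hαp
  have hznorm : 0 < ‖z‖ := norm_pos_iff.mpr hz
  -- the element of K
  set α' : K := ∑ i, (z i : ℚ) • w' i with hα'def
  have hval : ∀ (q : ℚ) (x : K), K.val (q • x) = q • (K.val x) :=
    fun q x => K.val.toLinearMap.map_smul q x
  have hlmm : ∀ (q : ℚ) (x : K),
      Algebra.leftMulMatrix b (q • x) = q • Algebra.leftMulMatrix b x :=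
    fun q x => (Algebra.leftMulMatrix b).toLinearMap.map_smul q x
  have hα'ne : α' ≠ 0 := by
    intro h0
    apply hz
    have hcoe : ∑ i, ((z i : ℚ)) • w i = 0 := by
      have h2 := congrArg (K.val) h0
      rw [hα'def, map_sum, map_zero] at h2
      calc ∑ i, ((z i : ℚ)) • w i = ∑ i, K.val ((z i : ℚ) • w' i) := by
            refine Finset.sum_congr rfl fun i _ => ?_
            rw [hval, hw']
        _ = 0 := h2
    have h3 := Fintype.linearIndependent_iff.mp hli (fun i => (z i : ℚ)) hcoe
    funext i
    have h4 : ((z i : ℚ)) = 0 := h3 i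
    simp only [Pi.zero_apply]
    exact_mod_cast h4
  have hcoeα' : (K.val α') = αp := by
    rw [hα'def, map_sum, hαp]
    apply Finset.sum_congr rfl
    intro i _
    rw [hval, hw', Rat.smul_def]
    push_cast
    ring
  set θ : K := (N : ℚ) • α' with hθdef
  have hθne : θ ≠ 0 := smul_ne_zero (by exact_mod_cast hN0.ne') hα'ne
  -- integer matrix A'
  set A' : Matrix (Fin d) (Fin d) ℤ := ∑ i, z i • B i with hA'def
  have hA'entry : ∀ j k, A' j k = ∑ i, z i * B i j k := by
    intro j k
    rw [hA'def, Matrix.sum_apply]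
    exact Finset.sum_congr rfl fun i _ => rfl
  set A'' : Matrix (Fin d) (Fin d) ℚ := A'.map (Int.cast : ℤ → ℚ) with hA''def
  have hA : A'' = Algebra.leftMulMatrix b θ := by
    have hR : Algebra.leftMulMatrix b θ = (N : ℚ) • ∑ i, (z i : ℚ) • M i := by
      rw [hθdef, hlmm, hα'def, map_sum]
      congr 1
      apply Finset.sum_congr rfl
      intro i _
      rw [hlmm, hM]
    rw [hR]
    ext j k
    rw [hA''def]
    show ((A' j k : ℤ) : ℚ) = ((N : ℚ) • ∑ i, (z i : ℚ) • M i) j k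
    rw [hA'entry]
    push_cast
    rw [Matrix.smul_apply, Matrix.sum_apply]
    simp only [Matrix.smul_apply, smul_eq_mul]
    rw [Finset.mul_sum]
    apply Finset.sum_congr rfl
    intro i _
    rw [hB]
    ring
  -- Cayley-Hamilton for θ
  set χ : Polynomial ℤ := A'.charpoly with hχdef
  have hχmap : A''.charpoly = χ.map (Int.castRingHom ℚ) := by
    rw [hA''def, hχdef]
    exact Matrix.charpoly_map A' (Int.castRingHom ℚ)
  have hχdeg : A''.charpoly.natDegree = d := by
    rw [Matrix.charpoly_natDegree_eq_dim, Fintype.card_fin]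
  have hCH : Polynomial.aeval θ A''.charpoly = 0 := by
    apply Algebra.leftMulMatrix_injective b
    rw [map_zero, ← Polynomial.aeval_algHom_apply, ← hA]
    exact Matrix.aeval_self_charpoly A''
  have hsumK : ∑ j ∈ Finset.range (d + 1), A''.charpoly.coeff j • θ ^ j = 0 := by
    have h5 : A''.charpoly.natDegree < d + 1 := by rw [hχdeg]; omega
    rw [← Polynomial.aeval_eq_sum_range' h5 θ]
    exact hCH
  -- push to ℚ_p
  set θp : ℚ_[p] := (N : ℚ_[p]) * αp with hθpdef
  have hθcoe : K.val θ = θp := by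
    rw [hθdef, hval, hcoeα', Rat.smul_def, hθpdef]
    push_cast
    ring
  have hrel : ∑ j ∈ Finset.range (d + 1), ((χ.coeff j : ℚ_[p])) * θp ^ j = 0 := by
    have := congrArg (K.val) hsumK
    rw [map_sum, map_zero] at this
    rw [← this]
    apply Finset.sum_congr rfl
    intro j _
    rw [hval, map_pow, hθcoe, hχmap, Polynomial.coeff_map, Rat.smul_def]
    simp only [eq_intCast]
    push_cast
    ring
  set a0 : ℤ := χ.coeff 0 with ha0def
  set γ : ℚ_[p] := ∑ j ∈ Finset.range d, (χ.coeff (j + 1) : ℚ_[p]) * θp ^ j with hγdef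
  have hsplit : (a0 : ℚ_[p]) = -(θp * γ) := by
    rw [Finset.sum_range_succ'] at hrel
    have : (a0 : ℚ_[p]) * θp ^ 0 = -(∑ j ∈ Finset.range d, (χ.coeff (j + 1) : ℚ_[p]) * θp ^ (j + 1)) := by
      rw [ha0def]
      linear_combination hrel
    rw [pow_zero, mul_one] at this
    rw [this, hγdef, neg_inj, Finset.mul_sum]
    apply Finset.sum_congr rfl
    intro j _
    ring
  -- norm bounds
  have hzi1 : ∀ i : Fin l, ‖(z i : ℚ_[p])‖ ≤ 1 := fun i => Padic.norm_int_le_one _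
  have hαpW : ‖αp‖ ≤ W := by
    rw [hαp]
    calc ‖∑ i, (z i : ℚ_[p]) * w i‖ ≤ ∑ i, ‖(z i : ℚ_[p]) * w i‖ := norm_sum_le _ _
      _ ≤ ∑ i, ‖w i‖ := by
          apply Finset.sum_le_sum
          intro i _
          rw [norm_mul]
          calc ‖(z i : ℚ_[p])‖ * ‖w i‖ ≤ 1 * ‖w i‖ :=
                mul_le_mul_of_nonneg_right (hzi1 i) (norm_nonneg _)
            _ = ‖w i‖ := one_mul _
      _ ≤ W := le_max_right _ _
  have hNnorm : ‖((N : ℚ_[p]))‖ ≤ 1 := by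
    have : ((N : ℤ) : ℚ_[p]) = (N : ℚ_[p]) := by push_cast; ring
    rw [← this]
    exact Padic.norm_int_le_one _
  have hθpW : ‖θp‖ ≤ W := by
    rw [hθpdef, norm_mul]
    calc ‖(N : ℚ_[p])‖ * ‖αp‖ ≤ 1 * W :=
          mul_le_mul hNnorm hαpW (norm_nonneg _) one_pos.le
      _ = W := one_mul _
  have hγC2 : ‖γ‖ ≤ C2 := by
    rw [hγdef]
    calc ‖∑ j ∈ Finset.range d, (χ.coeff (j + 1) : ℚ_[p]) * θp ^ j‖
        ≤ ∑ j ∈ Finset.range d, ‖(χ.coeff (j + 1) : ℚ_[p]) * θp ^ j‖ := norm_sum_le _ _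
      _ ≤ ∑ _j ∈ Finset.range d, W ^ d := by
          apply Finset.sum_le_sum
          intro j hj
          rw [norm_mul, norm_pow]
          have h1 : ‖((χ.coeff (j + 1) : ℤ) : ℚ_[p])‖ ≤ 1 := Padic.norm_int_le_one _
          have h2 : ‖θp‖ ^ j ≤ W ^ j := pow_le_pow_left₀ (norm_nonneg _) hθpW j
          have h3 : W ^ j ≤ W ^ d :=
            pow_le_pow_right₀ hW1 (le_of_lt (Finset.mem_range.mp hj))
          calc ‖((χ.coeff (j + 1) : ℤ) : ℚ_[p])‖ * ‖θp‖ ^ j ≤ 1 * W ^ d := by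
                apply mul_le_mul h1 (h2.trans h3) (by positivity) one_pos.le
            _ = W ^ d := one_mul _
      _ = C2 := by rw [Finset.sum_const, Finset.card_range, nsmul_eq_mul, hC2def]
  -- a0 nonzero
  have hdet : ((A'.det : ℤ) : ℚ) ≠ 0 := by
    have h1 : ((A'.det : ℤ) : ℚ) = A''.det := by
      rw [hA''def, show (Int.cast : ℤ → ℚ) = ⇑(Int.castRingHom ℚ) from rfl,
        ← RingHom.mapMatrix_apply]
      exact RingHom.map_det (Int.castRingHom ℚ) A'
    rw [h1, hA, ← Algebra.norm_eq_matrix_det b θ]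
    exact Algebra.norm_ne_zero_iff.mpr hθne
  have hdetχ : A'.det = (-1) ^ d * a0 := by
    have := Matrix.det_eq_sign_charpoly_coeff A'
    rwa [Fintype.card_fin] at this
  have ha0ne : a0 ≠ 0 := by
    intro h0
    apply hdet
    rw [hdetχ, h0]
    push_cast
    ring
  -- archimedean bound on a0
  have habs : |(a0 : ℝ)| ≤ C1 * ‖z‖ ^ d := by
    have hentry : ∀ j k, |((A'.map (Int.cast : ℤ → ℝ)) j k)| ≤ F * ‖z‖ := by
      intro j k
      show |((A' j k : ℤ) : ℝ)| ≤ F * ‖z‖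
      rw [hA'entry]
      push_cast
      calc |∑ i, (z i : ℝ) * (B i j k : ℝ)|
          ≤ ∑ i, |(z i : ℝ) * (B i j k : ℝ)| := Finset.abs_sum_le_sum_abs _ _
        _ ≤ ∑ _i : Fin l, ‖z‖ * E := by
            apply Finset.sum_le_sum
            intro i _
            rw [abs_mul]
            have hzi : |(z i : ℝ)| ≤ ‖z‖ := by
              have := norm_le_pi_norm z i
              rwa [Int.norm_eq_abs] at this
            exact mul_le_mul hzi (hE i j k) (abs_nonneg _) (norm_nonneg _)
        _ = l * E * ‖z‖ := by
            rw [Finset.sum_const, Finset.card_univ, Fintype.card_fin, nsmul_eq_mul]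
            ring
        _ ≤ F * ‖z‖ := by
            rw [hFdef]
            nlinarith [hznorm.le]
    have hdetbound := abs_det_le_of_entries (A'.map (Int.cast : ℤ → ℝ))
      (by positivity : (0:ℝ) ≤ F * ‖z‖) hentry
    have hcast : ((A'.det : ℤ) : ℝ) = (A'.map (Int.cast : ℤ → ℝ)).det := by
      rw [show (Int.cast : ℤ → ℝ) = ⇑(Int.castRingHom ℝ) from rfl,
        ← RingHom.mapMatrix_apply]
      exact RingHom.map_det (Int.castRingHom ℝ) A'
    have h2 : |(a0 : ℝ)| = |((A'.det : ℤ) : ℝ)| := by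
      rw [hdetχ]
      push_cast
      rw [abs_mul, abs_pow, abs_neg, abs_one, one_pow, one_mul]
    rw [h2, hcast]
    calc |(A'.map (Int.cast : ℤ → ℝ)).det|
        ≤ (Fintype.card (Equiv.Perm (Fin d)) : ℝ) * (F * ‖z‖) ^ d := hdetbound
      _ = C1 * ‖z‖ ^ d := by rw [hC1def, mul_pow]; ring
  -- p-adic lower bound on a0
  have ha0pos : 0 < |(a0 : ℝ)| := by
    rw [abs_pos]
    exact_mod_cast ha0ne
  have hpad : (C1 * ‖z‖ ^ d)⁻¹ ≤ ‖(a0 : ℚ_[p])‖ := by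
    calc (C1 * ‖z‖ ^ d)⁻¹ ≤ (|(a0 : ℝ)|)⁻¹ := inv_anti₀ ha0pos habs
      _ ≤ ‖(a0 : ℚ_[p])‖ := padic_int_norm_lower p a0 ha0ne
  -- assemble
  have hθα : ‖θp‖ ≤ ‖αp‖ := by
    rw [hθpdef, norm_mul]
    calc ‖(N : ℚ_[p])‖ * ‖αp‖ ≤ 1 * ‖αp‖ :=
          mul_le_mul_of_nonneg_right hNnorm (norm_nonneg _)
      _ = ‖αp‖ := one_mul _
  have hmain : ‖(a0 : ℚ_[p])‖ ≤ ‖αp‖ * C2 := by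
    rw [hsplit, norm_neg, norm_mul]
    exact mul_le_mul hθα hγC2 (norm_nonneg _) (norm_nonneg _)
  have hfinal : (C1 * ‖z‖ ^ d)⁻¹ ≤ ‖αp‖ * C2 := hpad.trans hmain
  have hr : ‖z‖ ^ (-(d : ℝ)) = (‖z‖ ^ d)⁻¹ := by
    rw [Real.rpow_neg (norm_nonneg z), Real.rpow_natCast]
  have hzd : (0 : ℝ) < ‖z‖ ^ d := pow_pos hznorm d
  calc (C1 * C2)⁻¹ * ‖z‖ ^ (-(d : ℝ)) = (C1 * ‖z‖ ^ d)⁻¹ / C2 := by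
        rw [hr]
        field_simp
    _ ≤ ‖αp‖ := (div_le_iff₀ hC20).mpr hfinal
end

section
/- Let p be a prime, and let V ⊆ ℚ_p^l be a ℚ_p-linear subspace that is spanned by vectors with coordinates algebraic over ℚ, and suppose V is not contained in any proper subspace of ℚ_p^l defined over ℚ. Then there exists a vector w ∈ V with all coordinates algebraic over ℚ such that the coordinates of w are linearly independent over ℚ. -/
set_option maxHeartbeats 1000000

open Polynomial in
private lemma exists_high_degree' (p : ℕ) [Fact p.Prime] (N : ℕ) :
    ∃ t : ℚ_[p], IsIntegral ℚ t ∧ N < (minpoly ℚ t).natDegree := by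
  have hp2 : 2 ≤ p := (Fact.out : p.Prime).two_le
  obtain ⟨q, hqge, hq⟩ := Nat.exists_infinite_primes (max (p + 2) (N + 1))
  have hqp : p + 2 ≤ q := le_trans (le_max_left _ _) hqge
  have hqN : N < q := lt_of_lt_of_le (Nat.lt_succ_self N) (le_trans (le_max_right _ _) hqge)
  have hq0 : q ≠ 0 := hq.ne_zero
  have hqodd : Odd q := hq.odd_of_ne_two (by omega)
  -- no rational q-th root of 1 + p
  have hroot : ∀ b : ℚ, b ^ q ≠ ((1 + p : ℕ) : ℚ) := by
    intro b hb
    have hbi : IsIntegral ℤ b := by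
      refine ⟨X ^ q - C ((1 + p : ℕ) : ℤ), monic_X_pow_sub_C _ hq0, ?_⟩
      simp only [eval₂_sub, eval₂_pow, eval₂_X, eval₂_C]
      rw [hb]
      push_cast
      ring
    obtain ⟨m, hm⟩ := IsIntegrallyClosed.isIntegral_iff.mp hbi
    have hmq : m ^ q = ((1 + p : ℕ) : ℤ) := by
      have : ((m : ℚ)) ^ q = ((1 + p : ℕ) : ℚ) := by rw [show ((m:ℚ)) = b from hm, hb]
      exact_mod_cast this
    rcases le_or_gt m 0 with h0 | h0
    · have h1 : m ^ q ≤ 0 := Odd.pow_nonpos hqodd h0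
      have : (0:ℤ) < ((1 + p : ℕ) : ℤ) := by positivity
      omega
    · rcases eq_or_lt_of_le (show (1:ℤ) ≤ m from h0) with h1 | h1
      · rw [← h1] at hmq
        simp at hmq
        omega
      · have h2 : (2:ℤ) ≤ m := h1
        have h3 : (2:ℤ) ^ q ≤ m ^ q := pow_le_pow_left₀ (by norm_num) h2 q
        have h4 : (q:ℤ) < 2 ^ q := by exact_mod_cast (Nat.lt_two_pow_self (n := q))
        have h5 : ((1 + p : ℕ) : ℤ) < (q:ℤ) := by exact_mod_cast (by omega : 1 + p < q)
        omega
  -- Hensel's lemma: root of X^q - (1+p) in ℤ_p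
  set a : ℤ_[p] := ((1 + p : ℕ) : ℤ_[p]) with ha
  set F : Polynomial ℤ_[p] := X ^ q - C a with hF
  have hev : F.eval 1 = -((p:ℕ) : ℤ_[p]) := by
    simp only [hF, ha, eval_sub, eval_pow, eval_X, eval_C, one_pow]
    push_cast
    ring
  have hder : (Polynomial.derivative F).eval 1 = (q : ℤ_[p]) := by
    simp [hF, derivative_X_pow]
  have hnq : ‖((q : ℕ) : ℤ_[p])‖ = 1 := by
    refine le_antisymm (PadicInt.norm_le_one _) (not_lt.1 ?_)
    intro hlt
    have : ((p:ℕ):ℤ) ∣ ((q:ℕ):ℤ) := by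
      refine (PadicInt.norm_int_lt_one_iff_dvd _).1 ?_
      push_cast
      exact_mod_cast hlt
    have hdvd : p ∣ q := by exact_mod_cast this
    have := (Nat.prime_dvd_prime_iff_eq (Fact.out) hq).1 hdvd
    omega
  have hnorm : ‖F.eval 1‖ < ‖(Polynomial.derivative F).eval 1‖ ^ 2 := by
    rw [hev, hder, norm_neg]
    rw [show ((q : ℕ) : ℤ_[p]) = ((q:ℕ):ℤ_[p]) from rfl] at hnq
    rw [hnq, one_pow, PadicInt.norm_p]
    rw [inv_lt_one_iff₀]
    right
    exact_mod_cast by omega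
  obtain ⟨z, hz, -⟩ := hensels_lemma hnorm
  have hzq : z ^ q = a := sub_eq_zero.mp (by rw [← hz]; simp [hF])
  set t : ℚ_[p] := (z : ℚ_[p]) with htdef
  have htq : t ^ q = ((1 + p : ℕ) : ℚ_[p]) := by
    rw [htdef, ← PadicInt.coe_pow, hzq, ha]
    push_cast
    ring
  have haev : Polynomial.aeval t (X ^ q - C ((1 + p : ℕ) : ℚ)) = 0 := by
    simp [htq]
  have hmin : X ^ q - C ((1 + p : ℕ) : ℚ) = minpoly ℚ t :=
    minpoly.eq_of_irreducible_of_monic (X_pow_sub_C_irreducible_of_prime hq hroot) haev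
      (monic_X_pow_sub_C _ hq0)
  refine ⟨t, ⟨X ^ q - C ((1 + p : ℕ) : ℚ), monic_X_pow_sub_C _ hq0, ?_⟩, ?_⟩
  · rw [← Polynomial.aeval_def]; exact haev
  · rw [← hmin, natDegree_X_pow_sub_C]; exact hqN

private lemma exists_finset_span' {R M : Type*} [Semiring R] [AddCommMonoid M] [Module R M]
    (s : Set M) (h : (Submodule.span R s).FG) :
    ∃ t : Finset M, ↑t ⊆ s ∧ Submodule.span R (t : Set M) = Submodule.span R s := by
  classical
  obtain ⟨f, hf⟩ := h
  have key : ∀ b : {x // x ∈ f}, ∃ tb : Finset M, ↑tb ⊆ s ∧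
      (b : M) ∈ Submodule.span R (tb : Set M) := by
    intro b
    refine Submodule.mem_span_finite_of_mem_span ?_
    rw [← hf]
    exact Submodule.subset_span b.2
  choose tb htb1 htb2 using key
  have hsub : ↑(f.attach.biUnion tb) ⊆ s := by
    intro x hx
    rw [Finset.mem_coe, Finset.mem_biUnion] at hx
    obtain ⟨b, _, hb⟩ := hx
    exact htb1 b hb
  refine ⟨f.attach.biUnion tb, hsub, ?_⟩
  refine le_antisymm (Submodule.span_mono hsub) ?_
  rw [← hf]
  refine Submodule.span_le.2 fun b hb => ?_
  refine Submodule.span_mono ?_ (htb2 ⟨b, hb⟩)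
  intro y hy
  rw [Finset.mem_coe, Finset.mem_biUnion]
  exact ⟨⟨b, hb⟩, Finset.mem_attach _ _, hy⟩

open Polynomial in
private lemma key_deg' {p : ℕ} [Fact p.Prime] (L : IntermediateField ℚ ℚ_[p]) [FiniteDimensional ℚ L]
    (t : ℚ_[p]) (ht : IsIntegral ℚ t) {n : ℕ} (γ : Fin n → L)
    (hrel : ∑ j, (γ j : ℚ_[p]) * t ^ (j : ℕ) = 0) {j₀ : Fin n} (hγ : γ j₀ ≠ 0)
    (hdeg : Module.finrank ℚ L * n < (minpoly ℚ t).natDegree) : False := by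
  classical
  set P : Polynomial L := ∑ j : Fin n, C (γ j) * X ^ (j : ℕ) with hP
  have hcoeff : P.coeff j₀ = γ j₀ := by
    rw [hP, Polynomial.finset_sum_coeff]
    rw [Finset.sum_eq_single j₀]
    · simp
    · intro j _ hne
      rw [coeff_C_mul, coeff_X_pow, if_neg (fun h => hne (Fin.ext h.symm)), mul_zero]
    · simp
  have hPne : P ≠ 0 := fun h => hγ (by rw [← hcoeff, h, Polynomial.coeff_zero])
  have haev : Polynomial.aeval t P = 0 := by
    rw [hP, map_sum]
    rw [← hrel]
    refine Finset.sum_congr rfl fun j _ => ?_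
    simp [Polynomial.aeval_C]
  have hti : IsIntegral (↥L) t := ht.tower_top
  have hdegP : P.natDegree ≤ n := by
    refine Polynomial.natDegree_sum_le_of_forall_le _ _ fun j _ => ?_
    calc (C (γ j) * X ^ (j:ℕ)).natDegree ≤ (X ^ (j:ℕ) : Polynomial L).natDegree := natDegree_C_mul_le _ _
    _ ≤ n := by rw [natDegree_X_pow]; exact (j.2).le
  have hmd : (minpoly (↥L) t).natDegree ≤ n := by
    refine le_trans (Polynomial.natDegree_le_natDegree ?_) hdegP
    exact minpoly.degree_le_of_ne_zero _ _ hPne haev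
  set F := IntermediateField.adjoin (↥L) {t} with hF
  have hFD : FiniteDimensional (↥L) F := IntermediateField.adjoin.finiteDimensional hti
  have hfr : Module.finrank (↥L) F = (minpoly (↥L) t).natDegree :=
    IntermediateField.adjoin.finrank hti
  have hFDQ : FiniteDimensional ℚ F := FiniteDimensional.trans ℚ (↥L) (↥F)
  set x₀ : ↥F := ⟨t, IntermediateField.mem_adjoin_simple_self (↥L) t⟩ with hx₀
  have hmap : minpoly ℚ ((algebraMap (↥F) ℚ_[p]) x₀) = minpoly ℚ x₀ :=
    minpoly.algebraMap_eq (algebraMap (↥F) ℚ_[p]).injective x₀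
  have h1 : (minpoly ℚ t).natDegree ≤ Module.finrank ℚ F := by
    have := minpoly.natDegree_le (A := ℚ) x₀
    rwa [← hmap] at this
  have h2 : Module.finrank ℚ F = Module.finrank ℚ L * Module.finrank (↥L) F :=
    (Module.finrank_mul_finrank ℚ (↥L) (↥F)).symm
  have : (minpoly ℚ t).natDegree ≤ Module.finrank ℚ L * n := by
    rw [h2, hfr] at h1
    exact h1.trans (Nat.mul_le_mul_left _ hmd)
  omega

private lemma step_b' {p : ℕ} [Fact p.Prime] {l : ℕ} (V : Submodule ℚ_[p] (Fin l → ℚ_[p]))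
    (hirr : ∀ W : Submodule ℚ_[p] (Fin l → ℚ_[p]),
      (∃ t : Set (Fin l → ℚ),
        W = Submodule.span ℚ_[p] ((fun f : Fin l → ℚ => fun i => ((f i : ℚ_[p]))) '' t)) →
      V ≤ W → W = ⊤)
    (tt : Finset (Fin l → ℚ_[p])) (hts : Submodule.span ℚ_[p] (tt : Set _) = V)
    (c : Fin l → ℚ) (hc : ∀ v ∈ tt, ∑ i, (c i : ℚ_[p]) * v i = 0) : c = 0 := by
  classical
  by_contra hc0
  obtain ⟨i₀, hi₀⟩ := Function.ne_iff.1 hc0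
  have hi₀' : ((c i₀ : ℚ_[p])) ≠ 0 := by exact_mod_cast hi₀
  -- the linear functional
  set φ : (Fin l → ℚ_[p]) →ₗ[ℚ_[p]] ℚ_[p] :=
    ∑ i : Fin l, (c i : ℚ_[p]) • LinearMap.proj i with hφ
  have hφx : ∀ x, φ x = ∑ i, (c i : ℚ_[p]) * x i := by
    intro x
    simp [hφ, LinearMap.sum_apply, smul_eq_mul]
  -- rational generators of the kernel
  set g : Fin l → Fin l → ℚ :=
    fun i k => (if k = i then (1:ℚ) else 0) - (c i / c i₀) * (if k = i₀ then 1 else 0) with hg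
  set cg : Fin l → Fin l → ℚ_[p] := fun i k => ((g i k : ℚ_[p])) with hcgdef
  have hcg : ∀ i k, cg i k =
      (if k = i then (1:ℚ_[p]) else 0) - ((c i : ℚ_[p]) / (c i₀ : ℚ_[p])) * (if k = i₀ then 1 else 0) := by
    intro i k
    simp only [hcgdef, hg]
    push_cast [apply_ite (fun r : ℚ => (r : ℚ_[p]))]
    ring
  have hφcg : ∀ i, φ (cg i) = 0 := by
    intro i
    rw [hφx]
    simp only [hcg, mul_sub, mul_ite, mul_one, mul_zero]
    rw [Finset.sum_sub_distrib]
    rw [Finset.sum_ite_eq' Finset.univ i (fun k => (c k : ℚ_[p]))]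
    rw [Finset.sum_ite_eq' Finset.univ i₀ (fun k => (c k : ℚ_[p]) * ((c i : ℚ_[p]) / (c i₀ : ℚ_[p])))]
    simp only [Finset.mem_univ, if_true]
    field_simp
    ring
  -- every x in ker φ is a combination of the cg i
  have hrep : ∀ x : Fin l → ℚ_[p], φ x = 0 → x = ∑ i, x i • cg i := by
    intro x hx
    rw [hφx] at hx
    funext k
    have h1 : (∑ i, x i • cg i) k = ∑ i, x i * cg i k := by
      rw [Finset.sum_apply]
      exact Finset.sum_congr rfl fun i _ => rfl
    rw [h1]
    simp only [hcg, mul_sub, ← mul_assoc]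
    rw [Finset.sum_sub_distrib]
    have e1 : ∑ i, x i * (if k = i then (1:ℚ_[p]) else 0) = x k := by
      simp [mul_ite, Finset.sum_ite_eq]
    have e2 : ∑ i, x i * ((c i : ℚ_[p]) / (c i₀ : ℚ_[p])) * (if k = i₀ then 1 else 0) = 0 := by
      by_cases hk : k = i₀
      · simp only [hk, if_pos]
        calc ∑ i, x i * ((c i : ℚ_[p]) / (c i₀ : ℚ_[p])) * 1
            = (∑ i, (c i : ℚ_[p]) * x i) / (c i₀ : ℚ_[p]) := by
              rw [Finset.sum_div]; exact Finset.sum_congr rfl fun i _ => by ring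
          _ = 0 := by rw [hx, zero_div]
      · simp [hk]
    rw [e1, e2, sub_zero]
  -- the rationally-defined subspace
  set W : Submodule ℚ_[p] (Fin l → ℚ_[p]) :=
    Submodule.span ℚ_[p] ((fun f : Fin l → ℚ => fun i => ((f i : ℚ_[p]))) '' Set.range g) with hW
  have himg : (fun f : Fin l → ℚ => fun i => ((f i : ℚ_[p]))) '' Set.range g = Set.range cg := by
    rw [← Set.range_comp]
    rfl
  have hVW : V ≤ W := by
    rw [← hts, hW, himg]
    refine Submodule.span_le.2 fun v hv => ?_
    have hv' : φ v = 0 := by rw [hφx]; exact hc v hv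
    rw [hrep v hv']
    exact Submodule.sum_mem _ fun i _ => Submodule.smul_mem _ _
      (Submodule.subset_span (Set.mem_range_self i))
  have hWtop : W = ⊤ := hirr W ⟨Set.range g, hW⟩ hVW
  have hWker : W ≤ LinearMap.ker φ := by
    rw [hW, himg]
    refine Submodule.span_le.2 fun v hv => ?_
    obtain ⟨i, rfl⟩ := hv
    exact LinearMap.mem_ker.2 (hφcg i)
  have hsingle : Pi.single i₀ (1:ℚ_[p]) ∈ LinearMap.ker φ :=
    hWker (hWtop ▸ Submodule.mem_top)
  have : φ (Pi.single i₀ (1:ℚ_[p])) = (c i₀ : ℚ_[p]) := by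
    rw [hφx]
    simp [Pi.single_apply, mul_ite, Finset.sum_ite_eq]
  exact hi₀' (by rw [← this]; exact LinearMap.mem_ker.1 hsingle)

/-- If `V ⊆ ℚ_p^l` is spanned by vectors with coordinates algebraic over `ℚ` and is not
contained in any proper subspace defined over `ℚ`, then there is `w ∈ V` with algebraic
coordinates that are linearly independent over `ℚ`. -/
theorem stmt2 (p : ℕ) [Fact p.Prime] (l : ℕ) (V : Submodule ℚ_[p] (Fin l → ℚ_[p]))
    (hspan : ∃ s : Set (Fin l → ℚ_[p]), (∀ v ∈ s, ∀ i, IsAlgebraic ℚ (v i)) ∧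
      V = Submodule.span ℚ_[p] s)
    (hirr : ∀ W : Submodule ℚ_[p] (Fin l → ℚ_[p]),
      (∃ t : Set (Fin l → ℚ),
        W = Submodule.span ℚ_[p] ((fun f : Fin l → ℚ => fun i => ((f i : ℚ_[p]))) '' t)) →
      V ≤ W → W = ⊤) :
    ∃ w ∈ V, (∀ i, IsAlgebraic ℚ (w i)) ∧ LinearIndependent ℚ w := by
  classical
  obtain ⟨s, hsalg, hsV⟩ := hspan
  have hfg : (Submodule.span ℚ_[p] s).FG := by
    rw [← hsV]; exact IsNoetherian.noetherian V
  obtain ⟨tt, htts, httspan⟩ := exists_finset_span' s hfg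
  have httV : Submodule.span ℚ_[p] (tt : Set _) = V := by rw [httspan, ← hsV]
  set n := tt.card with hn
  set u : Fin n → (Fin l → ℚ_[p]) := fun j => (tt.equivFin.symm j : Fin l → ℚ_[p]) with husetdef
  have hu : ∀ j, u j ∈ tt := fun j => (tt.equivFin.symm j).2
  have huint : ∀ j i, IsIntegral ℚ (u j i) := fun j i => (hsalg _ (htts (hu j)) i).isIntegral
  have husurj : ∀ v ∈ tt, ∃ j, u j = v := by
    intro v hv
    refine ⟨tt.equivFin ⟨v, hv⟩, ?_⟩
    simp [husetdef]
  set A : Set ℚ_[p] := Set.range (fun q : Fin n × Fin l => u q.1 q.2) with hA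
  haveI : Finite A := (Set.finite_range _).to_subtype
  set L : IntermediateField ℚ ℚ_[p] := IntermediateField.adjoin ℚ A with hL
  haveI hLfd : FiniteDimensional ℚ L :=
    IntermediateField.finiteDimensional_adjoin (fun x hx => by
      obtain ⟨⟨j, i⟩, rfl⟩ := hx; exact huint j i)
  obtain ⟨t, htint, htdeg⟩ := exists_high_degree' p (Module.finrank ℚ L * n)
  set w : Fin l → ℚ_[p] := fun i => ∑ j : Fin n, t ^ (j : ℕ) * u j i with hw
  have hwV : w ∈ V := by
    have hws : w = ∑ j : Fin n, t ^ (j : ℕ) • u j := by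
      funext i
      rw [Finset.sum_apply]
      rfl
    rw [hws]
    refine Submodule.sum_mem _ fun j _ => Submodule.smul_mem _ _ ?_
    rw [hsV]; exact Submodule.subset_span (htts (hu j))
  refine ⟨w, hwV, ?_, ?_⟩
  · intro i
    rw [isAlgebraic_iff_isIntegral]
    exact IsIntegral.sum _ fun j _ => (htint.pow _).mul (huint j i)
  · rw [Fintype.linearIndependent_iff]
    intro cc hcc
    have hmemL : ∀ j, (∑ i, (cc i : ℚ_[p]) * u j i) ∈ L := by
      intro j
      refine sum_mem fun i _ => mul_mem ?_ (IntermediateField.subset_adjoin ℚ A ⟨(j, i), rfl⟩)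
      exact SubfieldClass.ratCast_mem L (cc i)
    set γ : Fin n → ↥L := fun j => ⟨∑ i, (cc i : ℚ_[p]) * u j i, hmemL j⟩ with hγdef
    have hrel : ∑ j : Fin n, ((γ j : ℚ_[p])) * t ^ (j : ℕ) = 0 := by
      have e1 : ∑ j : Fin n, ((γ j : ℚ_[p])) * t ^ (j : ℕ)
          = ∑ j : Fin n, ∑ i, (cc i : ℚ_[p]) * (t ^ (j : ℕ) * u j i) := by
        refine Finset.sum_congr rfl fun j _ => ?_
        show (∑ i, (cc i : ℚ_[p]) * u j i) * t ^ (j : ℕ) = _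
        rw [Finset.sum_mul]
        exact Finset.sum_congr rfl fun i _ => by ring
      have e2 : ∀ i, ∑ j : Fin n, (cc i : ℚ_[p]) * (t ^ (j : ℕ) * u j i) = cc i • w i := by
        intro i
        rw [Rat.smul_def]
        show _ = (cc i : ℚ_[p]) * ∑ j : Fin n, t ^ (j : ℕ) * u j i
        rw [Finset.mul_sum]
      rw [e1, Finset.sum_comm]
      exact (Finset.sum_congr rfl fun i _ => e2 i).trans hcc
    have hγall : ∀ j, γ j = 0 := by
      by_contra h
      push_neg at h
      obtain ⟨j₀, hj₀⟩ := h
      exact key_deg' L t htint γ hrel hj₀ htdeg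
    have hcc0 : cc = 0 := by
      refine step_b' V hirr tt httV cc fun v hv => ?_
      obtain ⟨j, rfl⟩ := husurj v hv
      exact congrArg Subtype.val (hγall j)
    exact fun i => congrFun hcc0 i
end

section
/- Let V ⊆ ℝ^l be an ℝ-linear subspace spanned by vectors with real algebraic coordinates, and suppose V is not contained in any proper subspace of ℝ^l defined over ℚ. Then there exists w ∈ V all of whose coordinates are real algebraic numbers that are linearly independent over ℚ. -/
lemma no_rat_root (p : ℕ) (hp : p.Prime) : ∀ b : ℚ, b ^ p ≠ 2 := by
  intro b hb
  have hb0 : b ≠ 0 := by rintro rfl; simp [zero_pow hp.ne_zero] at hb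
  have : Fact (Nat.Prime 2) := ⟨Nat.prime_two⟩
  have h1 : padicValRat 2 (b ^ p) = padicValRat 2 2 := by rw [hb]
  rw [padicValRat.pow b] at h1
  have h2 : padicValRat 2 2 = 1 := by
    simpa using padicValRat.self (p := 2) one_lt_two
  rw [h2] at h1
  have hd : (p : ℤ) ∣ 1 := ⟨padicValRat 2 b, h1.symm⟩
  have := Int.le_of_dvd one_pos hd
  have := hp.two_le
  omega

open Polynomial in
lemma minpoly_nrt (p : ℕ) (hp : p.Prime) :
    minpoly ℚ ((2:ℝ) ^ ((p:ℝ))⁻¹) = X ^ p - C (2:ℚ) := by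
  have hroot : (Polynomial.aeval ((2:ℝ) ^ ((p:ℝ))⁻¹)) (X ^ p - C (2:ℚ)) = 0 := by
    simp [Real.rpow_inv_natCast_pow (by norm_num : (0:ℝ) ≤ 2) hp.ne_zero]
  exact (minpoly.eq_of_irreducible_of_monic
    (X_pow_sub_C_irreducible_of_prime hp (no_rat_root p hp)) hroot
    (monic_X_pow_sub_C _ hp.ne_zero)).symm

lemma hyperplane_mem {l : ℕ} (q : Fin l → ℚ) (i0 : Fin l) (hq : q i0 ≠ 0) (x : Fin l → ℝ)
    (hx : ∑ i, (q i : ℝ) * x i = 0) :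
    x ∈ Submodule.span ℝ ((fun f : Fin l → ℚ => fun i => ((f i : ℝ))) ''
      {f | ∑ i, q i * f i = 0}) := by
  set u : Fin l → (Fin l → ℚ) :=
    fun i => fun m => (if m = i then q i0 else 0) - (if m = i0 then q i else 0) with hu
  have hmem : ∀ i, u i ∈ {f : Fin l → ℚ | ∑ i, q i * f i = 0} := by
    intro i
    simp only [Set.mem_setOf_eq, hu, mul_sub, mul_ite, mul_zero,
      Finset.sum_sub_distrib, Finset.sum_ite_eq', Finset.mem_univ, if_true]
    ring
  have key : x = ∑ i ∈ Finset.univ.erase i0,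
      (x i / (q i0 : ℝ)) • (fun m => ((u i m : ℝ))) := by
    funext m
    have hsum : ∑ i ∈ Finset.univ.erase i0, (q i : ℝ) * x i = -((q i0 : ℝ) * x i0) := by
      have h := Finset.add_sum_erase Finset.univ (fun i => (q i : ℝ) * x i) (Finset.mem_univ i0)
      linarith [hx, h]
    simp only [Finset.sum_apply, Pi.smul_apply, smul_eq_mul, hu, Rat.cast_sub,
      apply_ite (fun r : ℚ => (r:ℝ)), Rat.cast_zero]
    by_cases hm : m = i0
    · subst hm
      have : ∀ i ∈ Finset.univ.erase m, x i / (q m : ℝ) *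
          ((if m = i then (q m : ℝ) else 0) - (if m = m then (q i : ℝ) else 0)) =
          -(x i * (q i : ℝ)) / (q m : ℝ) := by
        intro i hi
        rw [Finset.mem_erase] at hi
        rw [if_neg (fun h => hi.1 h.symm), if_pos rfl]
        ring
      rw [Finset.sum_congr rfl this, ← Finset.sum_div]
      have hq' : (q m : ℝ) ≠ 0 := by exact_mod_cast hq
      rw [eq_div_iff hq']
      have h2 : ∑ i ∈ Finset.univ.erase m, -(x i * (q i:ℝ)) = (q m:ℝ) * x m := by
        have h3 : ∀ i ∈ Finset.univ.erase m, -(x i * (q i:ℝ)) = -((q i:ℝ) * x i) := by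
          intros; ring
        rw [Finset.sum_congr rfl h3, Finset.sum_neg_distrib, hsum]; ring
      rw [h2]; ring
    · have : ∀ i ∈ Finset.univ.erase i0, x i / (q i0 : ℝ) *
          ((if m = i then (q i0 : ℝ) else 0) - (if m = i0 then (q i : ℝ) else 0)) =
          (if m = i then x i / (q i0:ℝ) * (q i0:ℝ) else 0) := by
        intro i hi
        rw [if_neg hm]
        by_cases h : m = i <;> simp [h]
      rw [Finset.sum_congr rfl this, Finset.sum_ite_eq]
      have hq' : (q i0 : ℝ) ≠ 0 := by exact_mod_cast hq
      rw [if_pos (Finset.mem_erase.2 ⟨hm, Finset.mem_univ m⟩)]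
      field_simp
  rw [key]
  refine Submodule.sum_smul_mem _ _ (fun i hi => Submodule.subset_span ⟨u i, hmem i, rfl⟩)

open IntermediateField in
lemma deg_bound (F : IntermediateField ℚ ℝ) [FiniteDimensional ℚ F] (x : ℝ)
    (hx : IsIntegral ℚ x) (k : ℕ)
    (h : k * Module.finrank ℚ F < (minpoly ℚ x).natDegree) :
    k < (minpoly F x).natDegree := by
  have hxF : IsIntegral F x := hx.tower_top
  have hEfin : FiniteDimensional F F⟮x⟯ := IntermediateField.adjoin.finiteDimensional hxF
  have h2 : Module.finrank F F⟮x⟯ = (minpoly F x).natDegree :=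
    IntermediateField.adjoin.finrank hxF
  have hEQfin : FiniteDimensional ℚ F⟮x⟯ := FiniteDimensional.trans ℚ F F⟮x⟯
  have h3 : Module.finrank ℚ F * Module.finrank F F⟮x⟯ = Module.finrank ℚ F⟮x⟯ :=
    Module.finrank_mul_finrank ℚ F F⟮x⟯
  have h4 : (minpoly ℚ x).natDegree ≤ Module.finrank ℚ F⟮x⟯ := by
    have h5 : minpoly ℚ x = minpoly ℚ (AdjoinSimple.gen F x) :=
      minpoly.algebraMap_eq (algebraMap F⟮x⟯ ℝ).injective (AdjoinSimple.gen F x)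
    rw [h5]
    exact minpoly.natDegree_le _
  by_contra hcon
  push_neg at hcon
  have h6 : Module.finrank ℚ F⟮x⟯ ≤ k * Module.finrank ℚ F := by
    rw [← h3, h2, Nat.mul_comm]
    exact Nat.mul_le_mul_right _ hcon
  omega


open Polynomial IntermediateField in
/-- If `V ⊆ ℝ^l` is spanned by vectors with real algebraic coordinates and is not contained
in any proper subspace defined over `ℚ`, then there is `w ∈ V` all of whose coordinates are
real algebraic numbers linearly independent over `ℚ`. -/
theorem stmt3 (l : ℕ) (V : Submodule ℝ (Fin l → ℝ))
    (hspan : ∃ s : Set (Fin l → ℝ), (∀ v ∈ s, ∀ i, IsAlgebraic ℚ (v i)) ∧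
      V = Submodule.span ℝ s)
    (hirr : ∀ W : Submodule ℝ (Fin l → ℝ),
      (∃ t : Set (Fin l → ℚ),
        W = Submodule.span ℝ ((fun f : Fin l → ℚ => fun i => ((f i : ℝ))) '' t)) →
      V ≤ W → W = ⊤) :
    ∃ w ∈ V, (∀ i, IsAlgebraic ℚ (w i)) ∧ LinearIndependent ℚ w := by
  classical
  obtain ⟨s, halg, hVs⟩ := hspan
  -- extract a finite spanning subset T of s
  obtain ⟨G, hG⟩ := IsNoetherian.noetherian V
  choose Tg hTg hmemTg using fun g : {x // x ∈ G} => Submodule.mem_span_finite_of_mem_span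
    (show (g : Fin l → ℝ) ∈ Submodule.span ℝ s from hVs ▸ hG ▸ Submodule.subset_span g.2)
  set T : Finset (Fin l → ℝ) := G.attach.biUnion (fun g => Tg g) with hT
  have hTs : (T : Set (Fin l → ℝ)) ⊆ s := by
    intro x hx
    rw [Finset.mem_coe, hT, Finset.mem_biUnion] at hx
    obtain ⟨g, -, hg⟩ := hx
    exact hTg _ hg
  have hVT : V = Submodule.span ℝ (T : Set (Fin l → ℝ)) := by
    apply le_antisymm
    · conv_lhs => rw [← hG]
      rw [Submodule.span_le]
      intro g hg
      refine Submodule.span_mono ?_ (hmemTg ⟨g, hg⟩)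
      intro x hx
      rw [Finset.mem_coe] at hx ⊢
      rw [hT, Finset.mem_biUnion]
      exact ⟨⟨g, hg⟩, Finset.mem_attach _ _, hx⟩
    · rw [hVs]; exact Submodule.span_mono hTs
  set k := T.card with hk
  set v : Fin k → (Fin l → ℝ) := fun j => (T.equivFin.symm j : Fin l → ℝ) with hv
  have hvT : ∀ j, v j ∈ T := fun j => (T.equivFin.symm j).2
  have hvV : ∀ j, v j ∈ V := fun j => hVT ▸ Submodule.subset_span (hvT j)
  have hvalg : ∀ (j : Fin k) (i : Fin l), IsIntegral ℚ (v j i) := fun j i =>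
    isAlgebraic_iff_isIntegral.1 (halg _ (hTs (hvT j)) i)
  -- the field F generated by the entries
  set S : Set ℝ := Set.range (fun pr : Fin k × Fin l => v pr.1 pr.2) with hS
  have hSfin : Finite S := Set.finite_coe_iff.2 (Set.finite_range _)
  set F : IntermediateField ℚ ℝ := IntermediateField.adjoin ℚ S with hF
  have hFfin : FiniteDimensional ℚ F := IntermediateField.finiteDimensional_adjoin
    (fun x hx => by obtain ⟨pr, rfl⟩ := hx; exact hvalg pr.1 pr.2)
  set d := Module.finrank ℚ F with hdk
  have hd : 0 < d := Module.finrank_pos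
  obtain ⟨p, hpge, hpprime⟩ := Nat.exists_infinite_primes (k * d + 1)
  set θ : ℝ := (2:ℝ) ^ ((p:ℝ))⁻¹ with hθ
  have hmin : minpoly ℚ θ = X ^ p - C (2:ℚ) := minpoly_nrt p hpprime
  have hθint : IsIntegral ℚ θ := ⟨X ^ p - C (2:ℚ), monic_X_pow_sub_C _ hpprime.ne_zero, by
    simp [hθ, Real.rpow_inv_natCast_pow (by norm_num : (0:ℝ) ≤ 2) hpprime.ne_zero]⟩
  have hθF : IsIntegral F θ := hθint.tower_top
  -- degree bound over F
  have hdeg : k < (minpoly F θ).natDegree := by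
    refine deg_bound F θ hθint k ?_
    rw [hmin, natDegree_X_pow_sub_C, ← hdk]
    omega
  -- linear independence of powers of θ over F
  have hLIF : LinearIndependent F (fun j : Fin k => θ ^ (j : ℕ)) := by
    have := (linearIndependent_pow (K := F) θ).comp
      (Fin.castLE hdeg.le) (Fin.castLE_injective hdeg.le)
    exact this
  -- the witness
  set w : Fin l → ℝ := fun i => ∑ j : Fin k, θ ^ (j:ℕ) * v j i with hw
  refine ⟨w, ?_, ?_, ?_⟩
  · have : w = ∑ j : Fin k, θ ^ (j:ℕ) • v j := by
      funext i
      simp [hw, Finset.sum_apply]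
    rw [this]
    exact Submodule.sum_smul_mem V _ (fun j _ => hvV j)
  · intro i
    have : w i ∈ integralClosure ℚ ℝ := by
      refine Subalgebra.sum_mem _ (fun j _ => ?_)
      exact mul_mem (pow_mem (show θ ∈ integralClosure ℚ ℝ from hθint) _) (hvalg j i)
    exact this.isAlgebraic
  · rw [Fintype.linearIndependent_iff]
    intro g hg
    -- reorganize the sum
    set c : Fin k → ℝ := fun j => ∑ i, (g i : ℝ) * v j i with hc
    have hcF : ∀ j, c j ∈ F := by
      intro j
      refine sum_mem (fun i _ => mul_mem ?_ ?_)
      · exact (eq_ratCast (algebraMap ℚ ℝ) (g i)) ▸ F.algebraMap_mem (g i)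
      · exact IntermediateField.subset_adjoin ℚ S ⟨(j, i), rfl⟩
    have hrel : ∑ j : Fin k, (⟨c j, hcF j⟩ : F) • θ ^ (j:ℕ) = 0 := by
      have step1 : ∑ j : Fin k, (⟨c j, hcF j⟩ : F) • θ ^ (j:ℕ)
          = ∑ j : Fin k, c j * θ ^ (j:ℕ) :=
        Finset.sum_congr rfl (fun j _ => rfl)
      have step2 : ∑ j : Fin k, c j * θ ^ (j:ℕ) = ∑ i, g i • w i := by
        simp only [hc, hw, Rat.smul_def, Finset.mul_sum, Finset.sum_mul]
        rw [Finset.sum_comm]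
        exact Finset.sum_congr rfl fun i _ => Finset.sum_congr rfl fun j _ => by ring
      rw [step1, step2, hg]
    have hc0 : ∀ j, c j = 0 := by
      intro j
      have := Fintype.linearIndependent_iff.1 hLIF (fun j => ⟨c j, hcF j⟩) hrel j
      exact congrArg Subtype.val this
    -- conclude g = 0
    intro i0
    by_contra hgi
    set t : Set (Fin l → ℚ) := {f | ∑ i, g i * f i = 0} with ht
    set W : Submodule ℝ (Fin l → ℝ) :=
      Submodule.span ℝ ((fun f : Fin l → ℚ => fun i => ((f i : ℝ))) '' t) with hW
    have hVW : V ≤ W := by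
      rw [hVT, Submodule.span_le]
      intro x hx
      obtain ⟨j, rfl⟩ : ∃ j, v j = x :=
        ⟨T.equivFin ⟨x, hx⟩, by simp [hv]⟩
      exact hyperplane_mem g i0 hgi (v j) (hc0 j)
    have hWtop : W = ⊤ := hirr W ⟨t, hW⟩ hVW
    -- contradiction
    have hker : ∀ x ∈ W, ∑ i, (g i : ℝ) * x i = 0 := by
      have hφ : ∀ (a b : Fin l → ℝ) (r : ℝ),
          True := fun _ _ _ => trivial
      intro x hx
      rw [hW] at hx
      refine Submodule.span_induction ?_ ?_ ?_ ?_ hx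
      · rintro y ⟨f, hf, rfl⟩
        have : ((∑ i, g i * f i : ℚ) : ℝ) = 0 := by rw [hf]; norm_num
        push_cast at this
        exact this
      · simp
      · intro a b _ _ ha hb
        simp only [Pi.add_apply, mul_add, Finset.sum_add_distrib, ha, hb, add_zero]
      · intro r a _ ha
        simp only [Pi.smul_apply, smul_eq_mul]
        calc ∑ i, (g i:ℝ) * (r * a i) = r * ∑ i, (g i:ℝ) * a i := by
              rw [Finset.mul_sum]; exact Finset.sum_congr rfl fun i _ => by ring
          _ = 0 := by rw [ha, mul_zero]
    have hzero := hker (fun i => ((g i : ℝ))) (hWtop ▸ Submodule.mem_top)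
    have hple : ∀ i ∈ Finset.univ, (0:ℝ) ≤ (g i : ℝ) * (g i : ℝ) := fun i _ => mul_self_nonneg _
    have hz2 := (Finset.sum_eq_zero_iff_of_nonneg hple).1 hzero i0 (Finset.mem_univ i0)
    have : (g i0 : ℝ) = 0 := by nlinarith [hz2]
    exact hgi (by exact_mod_cast this)
end

section
/- Let w = (w_1, ..., w_l) ∈ ℝ^l be a vector whose coordinates are real algebraic numbers that are linearly independent over ℚ. Then there exist constants c > 0 and L > 0 such that |⟨z, w⟩| ≥ c ‖z‖^{-L} for all nonzero z ∈ ℤ^l, i.e., w is (c, L)-Diophantine. -/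
set_option maxHeartbeats 1000000


/-- A vector `w ∈ ℝ^l` with real algebraic coordinates linearly independent over `ℚ`
is `(c, L)`-Diophantine: `|⟨z, w⟩| ≥ c ‖z‖^{-L}` for all nonzero `z ∈ ℤ^l`. -/
theorem stmt4 (l : ℕ) (w : Fin l → ℝ) (halg : ∀ i, IsAlgebraic ℚ (w i))
    (hli : LinearIndependent ℚ w) :
    ∃ c > (0 : ℝ), ∃ L > (0 : ℝ), ∀ z : Fin l → ℤ, z ≠ 0 →
      c * ‖z‖ ^ (-L) ≤ |∑ i, (z i : ℝ) * w i| := by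
  classical
  rcases Nat.eq_zero_or_pos l with rfl | hl
  · exact ⟨1, one_pos, 1, one_pos, fun z hz => absurd (Subsingleton.elim z 0) hz⟩
  set K : IntermediateField ℚ ℝ := IntermediateField.adjoin ℚ (Set.range w) with hK
  haveI : Finite (Set.range w) := Set.finite_range w
  haveI : FiniteDimensional ℚ K := by
    apply IntermediateField.finiteDimensional_adjoin
    rintro x ⟨i, rfl⟩
    exact (halg i).isIntegral
  set w' : Fin l → K := fun i => ⟨w i, IntermediateField.subset_adjoin ℚ _ ⟨i, rfl⟩⟩ with hw'
  -- clear denominators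
  have hden : ∀ i, ∃ y : ℤ, y ≠ 0 ∧ IsIntegral ℤ ((y : K) * w' i) := by
    intro i
    have halg' : IsAlgebraic ℤ (w' i) := by
      rw [IsFractionRing.isAlgebraic_iff ℤ ℚ K]
      exact Algebra.IsAlgebraic.isAlgebraic _
    obtain ⟨y, hy, hint⟩ := halg'.exists_integral_multiple
    refine ⟨y, hy, ?_⟩
    rwa [zsmul_eq_mul] at hint
  choose y hy0 hyint using hden
  set D : ℤ := ∏ i, y i with hD
  have hD0 : D ≠ 0 := Finset.prod_ne_zero_iff.mpr fun i _ => hy0 i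
  have hDint : ∀ i, IsIntegral ℤ ((D : K) * w' i) := by
    intro i
    have hdvd : y i ∣ D := Finset.dvd_prod_of_mem _ (Finset.mem_univ i)
    obtain ⟨e, he⟩ := hdvd
    have : ((D : K)) * w' i = (e : K) * ((y i : K) * w' i) := by
      rw [he]; push_cast; ring
    rw [this]
    exact (isIntegral_algebraMap (x := e)).mul (hyint i)
  -- the distinguished real embedding
  set σ₀ : K →ₐ[ℚ] ℂ := (Complex.ofRealAm.restrictScalars ℚ).comp K.val with hσ₀
  set d : ℕ := Fintype.card (K →ₐ[ℚ] ℂ) with hd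
  have hd1 : 1 ≤ d := Fintype.card_pos_iff.mpr ⟨σ₀⟩
  -- uniform bound on conjugates
  set M : ℝ := 1 + ∑ σ : K →ₐ[ℚ] ℂ, ∑ i, ‖σ ((D : K) * w' i)‖ with hM
  have hM1 : 1 ≤ M := by
    have : (0:ℝ) ≤ ∑ σ : K →ₐ[ℚ] ℂ, ∑ i, ‖σ ((D : K) * w' i)‖ :=
      Finset.sum_nonneg fun σ _ => Finset.sum_nonneg fun i _ => norm_nonneg _
    linarith
  have hMb : ∀ (σ : K →ₐ[ℚ] ℂ) i, ‖σ ((D : K) * w' i)‖ ≤ M := by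
    intro σ i
    have h1 : ‖σ ((D : K) * w' i)‖ ≤ ∑ j, ‖σ ((D : K) * w' j)‖ :=
      Finset.single_le_sum (f := fun j => ‖σ ((D : K) * w' j)‖)
        (fun j _ => norm_nonneg _) (Finset.mem_univ i)
    have h2 : ∑ j, ‖σ ((D : K) * w' j)‖ ≤
        ∑ τ : K →ₐ[ℚ] ℂ, ∑ j, ‖τ ((D : K) * w' j)‖ :=
      Finset.single_le_sum (f := fun τ : K →ₐ[ℚ] ℂ => ∑ j, ‖τ ((D : K) * w' j)‖)
        (fun τ _ => Finset.sum_nonneg fun j _ => norm_nonneg _) (Finset.mem_univ σ)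
    simp only [hM]; linarith
  set C : ℝ := l * M with hC
  have hC1 : 1 ≤ C := by
    have : (1:ℝ) ≤ (l:ℝ) := by exact_mod_cast hl
    nlinarith
  have hDabs : (0:ℝ) < |(D:ℝ)| := abs_pos.mpr (by exact_mod_cast hD0)
  have hCpos : (0:ℝ) < C := zero_lt_one.trans_le hC1
  refine ⟨(|(D:ℝ)| * C ^ (d - 1))⁻¹,
    inv_pos.mpr (mul_pos hDabs (pow_pos hCpos _)), d, Nat.cast_pos.mpr hd1, ?_⟩
  intro z hz
  have hz1 : 1 ≤ ‖z‖ := by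
    obtain ⟨i, hi⟩ : ∃ i, z i ≠ 0 := by
      by_contra h; push_neg at h; exact hz (funext h)
    calc (1:ℝ) ≤ ‖z i‖ := by
          rw [Int.norm_eq_abs]; exact_mod_cast Int.one_le_abs hi
      _ ≤ ‖z‖ := norm_le_pi_norm z i
  have hz0 : (0:ℝ) ≤ ‖z‖ := zero_le_one.trans hz1
  set α : K := ∑ i, (z i : K) * w' i with hα
  set αR : ℝ := ∑ i, (z i : ℝ) * w i with hαR
  have hsub : (K.val) α = αR := by
    rw [hα, map_sum, hαR]
    refine Finset.sum_congr rfl fun i _ => ?_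
    rw [map_mul, map_intCast]
    rfl
  have hα0 : α ≠ 0 := by
    intro h0
    have hR0 : αR = 0 := by rw [← hsub, h0, map_zero]
    have hg := (Fintype.linearIndependent_iff.mp hli) (fun i => (z i : ℚ)) ?_
    · exact hz (funext fun i => by exact_mod_cast hg i)
    · rw [← hR0, hαR]
      refine Finset.sum_congr rfl fun i _ => ?_
      rw [Rat.smul_def]
      push_cast
      ring
  have hDα : IsIntegral ℤ ((D:K) * α) := by
    have hrw : (D:K) * α = ∑ i, algebraMap ℤ K (z i) * ((D:K) * w' i) := by
      rw [hα, Finset.mul_sum]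
      refine Finset.sum_congr rfl fun i _ => ?_
      rw [eq_intCast (algebraMap ℤ K)]
      ring
    rw [hrw]
    exact IsIntegral.sum _ fun i _ => (isIntegral_algebraMap).mul (hDint i)
  set N : ℚ := Algebra.norm ℚ ((D:K) * α) with hN
  have hN0 : N ≠ 0 := by
    have hne : (D:K) * α ≠ 0 := mul_ne_zero (by exact_mod_cast hD0) hα0
    exact Algebra.norm_ne_zero_iff.mpr hne
  have hNint : IsIntegral ℤ N := Algebra.isIntegral_norm ℚ hDα
  obtain ⟨n, hn⟩ := IsIntegrallyClosed.isIntegral_iff.mp hNint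
  have hn0 : n ≠ 0 := by
    rintro rfl
    apply hN0
    rw [← hn, map_zero]
  have h1N : 1 ≤ |((N:ℝ))| := by
    have : ((n:ℚ):ℝ) = (N:ℝ) := by exact_mod_cast congrArg (fun q : ℚ => (q:ℝ)) hn
    rw [← this]
    push_cast
    exact_mod_cast Int.one_le_abs hn0
  have hprod : ((N:ℂ)) = ∏ σ : K →ₐ[ℚ] ℂ, σ ((D:K) * α) := by
    have h := Algebra.norm_eq_prod_embeddings ℚ ℂ ((D:K) * α)
    rwa [eq_ratCast (algebraMap ℚ ℂ), ← hN] at h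
  have habs : |((N:ℝ))| = ∏ σ : K →ₐ[ℚ] ℂ, ‖σ ((D:K) * α)‖ := by
    have h1 : ‖(N:ℂ)‖ = ∏ σ : K →ₐ[ℚ] ℂ, ‖σ ((D:K) * α)‖ := by
      rw [hprod, norm_prod]
    rw [← h1]
    have h2 : ((N:ℚ):ℂ) = (((N:ℝ)):ℂ) := by push_cast; ring
    rw [h2, Complex.norm_real, Real.norm_eq_abs]
  have hσb : ∀ σ : K →ₐ[ℚ] ℂ, ‖σ ((D:K) * α)‖ ≤ C * ‖z‖ := by
    intro σ
    have hrw : σ ((D:K) * α) = ∑ i, (z i : ℂ) * σ ((D:K) * w' i) := by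
      rw [hα, Finset.mul_sum, map_sum]
      refine Finset.sum_congr rfl fun i _ => ?_
      rw [show (D:K) * ((z i : K) * w' i) = (z i : K) * ((D:K) * w' i) from by ring,
        map_mul, map_intCast]
    rw [hrw]
    calc ‖∑ i, (z i : ℂ) * σ ((D:K) * w' i)‖
        ≤ ∑ i, ‖(z i : ℂ) * σ ((D:K) * w' i)‖ := norm_sum_le _ _
      _ ≤ ∑ _i : Fin l, ‖z‖ * M := by
          refine Finset.sum_le_sum fun i _ => ?_
          rw [norm_mul, Complex.norm_intCast]
          have h1 : |((z i : ℝ))| ≤ ‖z‖ := by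
            rw [← Int.norm_eq_abs] at *
            exact_mod_cast norm_le_pi_norm z i
          exact mul_le_mul h1 (hMb σ i) (norm_nonneg _) hz0
      _ = C * ‖z‖ := by
          rw [Finset.sum_const, Finset.card_univ, Fintype.card_fin, nsmul_eq_mul, hC]
          ring
  have hσ₀v : ‖σ₀ ((D:K) * α)‖ = |(D:ℝ)| * |αR| := by
    have h1 : σ₀ ((D:K) * α) = ((((D:ℝ) * αR : ℝ)) : ℂ) := by
      rw [hσ₀]
      change ((K.val ((D:K) * α) : ℝ) : ℂ) = _
      norm_cast
      rw [show (K.val) ((D:K) * α) = (K.val) ((D:K)) * (K.val) α from map_mul _ _ _,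
        hsub, map_intCast]
    rw [h1, Complex.norm_real, Real.norm_eq_abs, abs_mul]
  have key : 1 ≤ (|(D:ℝ)| * |αR|) * (C * ‖z‖) ^ (d - 1) := by
    have hCz : (0:ℝ) ≤ C * ‖z‖ := mul_nonneg hCpos.le hz0
    have herase := Finset.prod_le_prod (s := Finset.univ.erase σ₀)
      (f := fun σ : K →ₐ[ℚ] ℂ => ‖σ ((D:K) * α)‖)
      (g := fun _ => C * ‖z‖)
      (fun σ _ => norm_nonneg _) (fun σ _ => hσb σ)
    rw [Finset.prod_const, Finset.card_erase_of_mem (Finset.mem_univ σ₀),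
      Finset.card_univ] at herase
    have hsplit := Finset.mul_prod_erase Finset.univ
      (fun σ : K →ₐ[ℚ] ℂ => ‖σ ((D:K) * α)‖) (Finset.mem_univ σ₀)
    have hnn : (0:ℝ) ≤ ‖σ₀ ((D:K) * α)‖ := norm_nonneg _
    calc (1:ℝ) ≤ |((N:ℝ))| := h1N
      _ = ∏ σ : K →ₐ[ℚ] ℂ, ‖σ ((D:K) * α)‖ := habs
      _ = ‖σ₀ ((D:K) * α)‖ *
          ∏ σ ∈ Finset.univ.erase σ₀, ‖σ ((D:K) * α)‖ := hsplit.symm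
      _ ≤ ‖σ₀ ((D:K) * α)‖ * (C * ‖z‖) ^ (d - 1) :=
          mul_le_mul_of_nonneg_left herase hnn
      _ = (|(D:ℝ)| * |αR|) * (C * ‖z‖) ^ (d - 1) := by rw [hσ₀v]
  -- conclude
  have hP : (0:ℝ) < |(D:ℝ)| * C ^ (d - 1) * ‖z‖ ^ (d - 1) :=
    mul_pos (mul_pos hDabs (pow_pos hCpos _)) (pow_pos (zero_lt_one.trans_le hz1) _)
  have hmain : (|(D:ℝ)| * C ^ (d - 1))⁻¹ * (‖z‖ ^ (d - 1))⁻¹ ≤ |αR| := by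
    rw [← mul_inv]
    rw [show |(D:ℝ)| * C ^ (d - 1) * ‖z‖ ^ (d - 1) =
      |(D:ℝ)| * C ^ (d - 1) * ‖z‖ ^ (d - 1) from rfl]
    have h2 : 1 ≤ |αR| * (|(D:ℝ)| * C ^ (d - 1) * ‖z‖ ^ (d - 1)) := by
      calc (1:ℝ) ≤ (|(D:ℝ)| * |αR|) * (C * ‖z‖) ^ (d - 1) := key
        _ = |αR| * (|(D:ℝ)| * C ^ (d - 1) * ‖z‖ ^ (d - 1)) := by rw [mul_pow]; ring
    rw [inv_le_iff_one_le_mul₀ hP]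
    linarith [h2]
  have hrpow : ‖z‖ ^ (-(d:ℝ)) ≤ (‖z‖ ^ (d - 1))⁻¹ := by
    have h1 : ‖z‖ ^ (-(d:ℝ)) ≤ ‖z‖ ^ (-(((d - 1 : ℕ)):ℝ)) := by
      apply Real.rpow_le_rpow_of_exponent_le hz1
      rw [Nat.cast_sub hd1]
      push_cast
      linarith
    have h2 : ‖z‖ ^ (-(((d - 1 : ℕ)):ℝ)) = (‖z‖ ^ (d - 1))⁻¹ := by
      rw [Real.rpow_neg hz0, Real.rpow_natCast]
    rw [← h2]
    exact h1
  calc (|(D:ℝ)| * C ^ (d - 1))⁻¹ * ‖z‖ ^ (-(d:ℝ))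
      ≤ (|(D:ℝ)| * C ^ (d - 1))⁻¹ * (‖z‖ ^ (d - 1))⁻¹ :=
        mul_le_mul_of_nonneg_left hrpow (inv_pos.mpr (mul_pos hDabs (pow_pos hCpos _))).le
    _ ≤ |αR| := hmain
end

section
/- Let A, B, C ∈ GL(d, ℚ) be commuting semisimple matrices. Call a matrix T 'ergodic' if no power T^r (r ≥ 1) has a nonzero fixed vector in ℚ^d. Suppose A^i B^j is ergodic for all integer pairs (i, j) ≠ (0, 0). Then there are at most finitely many primitive integer triples (k, l, m) ∈ ℤ^3 (triples with gcd(k, l, m) = 1) such that A^k B^l C^m is not ergodic. -/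
/-- A matrix (given as an element of `GL(d, ℚ)`) is "ergodic" if no positive power of it
fixes a nonzero rational vector. -/
def MatErgodic {d : ℕ} (T : GL (Fin d) ℚ) : Prop :=
  ∀ r : ℕ, 1 ≤ r → ∀ v : Fin d → ℚ,
    ((T ^ r : GL (Fin d) ℚ) : Matrix (Fin d) (Fin d) ℚ).mulVec v = v → v = 0


lemma stmt5_mul_shuffle {M : Type*} [Monoid M] (X Y Z X' Y' Z' : M)
    (e1 : Z * X' = X' * Z) (e2 : Y * X' = X' * Y) (e3 : Z * Y' = Y' * Z) :
    X * Y * Z * (X' * Y' * Z') = X * X' * (Y * Y') * (Z * Z') := by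
  calc X * Y * Z * (X' * Y' * Z') = X * Y * (Z * X') * (Y' * Z') := by
        simp only [mul_assoc]
    _ = X * Y * (X' * Z) * (Y' * Z') := by rw [e1]
    _ = X * (Y * X') * (Z * (Y' * Z')) := by simp only [mul_assoc]
    _ = X * (X' * Y) * (Z * (Y' * Z')) := by rw [e2]
    _ = X * X' * (Y * (Z * Y') * Z') := by simp only [mul_assoc]
    _ = X * X' * (Y * (Y' * Z) * Z') := by rw [e3]
    _ = X * X' * (Y * Y') * (Z * Z') := by simp only [mul_assoc]

variable {d : ℕ}

/-- `v` is a fixed vector of `T`. -/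
def Stmt5Fixv (T : GL (Fin d) ℚ) (v : Fin d → ℚ) : Prop :=
  (T : Matrix (Fin d) (Fin d) ℚ).mulVec v = v

lemma stmt5_fixv_mul {T S : GL (Fin d) ℚ} {v : Fin d → ℚ} (hT : Stmt5Fixv T v) (hS : Stmt5Fixv S v) :
    Stmt5Fixv (T * S) v := by
  unfold Stmt5Fixv at *
  rw [Units.val_mul, ← Matrix.mulVec_mulVec, hS, hT]

lemma stmt5_fixv_one {v : Fin d → ℚ} : Stmt5Fixv (1 : GL (Fin d) ℚ) v := by
  unfold Stmt5Fixv
  rw [Units.val_one, Matrix.one_mulVec]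

lemma stmt5_fixv_inv {T : GL (Fin d) ℚ} {v : Fin d → ℚ} (hT : Stmt5Fixv T v) : Stmt5Fixv T⁻¹ v := by
  unfold Stmt5Fixv at *
  conv_lhs => rw [← hT]
  rw [Matrix.mulVec_mulVec, ← Units.val_mul, inv_mul_cancel, Units.val_one, Matrix.one_mulVec]

lemma stmt5_fixv_pow {T : GL (Fin d) ℚ} {v : Fin d → ℚ} (hT : Stmt5Fixv T v) (n : ℕ) : Stmt5Fixv (T ^ n) v := by
  induction n with
  | zero => simpa using (stmt5_fixv_one : Stmt5Fixv (1 : GL (Fin d) ℚ) v)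
  | succ n ih => rw [pow_succ]; exact stmt5_fixv_mul ih hT

lemma stmt5_fixv_zpow {T : GL (Fin d) ℚ} {v : Fin d → ℚ} (hT : Stmt5Fixv T v) (z : ℤ) : Stmt5Fixv (T ^ z) v := by
  cases z with
  | ofNat n => rw [Int.ofNat_eq_coe, zpow_natCast]; exact stmt5_fixv_pow hT n
  | negSucc n => rw [zpow_negSucc]; exact stmt5_fixv_inv (stmt5_fixv_pow hT _)

lemma stmt5_fixv_smul {T : GL (Fin d) ℚ} {v : Fin d → ℚ} (hT : Stmt5Fixv T v) (c : ℚ) :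
    Stmt5Fixv T (c • v) := by
  unfold Stmt5Fixv at *
  rw [Matrix.mulVec_smul, hT]

/-- The homomorphism `ℤ³ → GL_d(ℚ)`. -/
def Stmt5G (A B C : GL (Fin d) ℚ) (k l m : ℤ) : GL (Fin d) ℚ := A ^ k * B ^ l * C ^ m

variable {A B C : GL (Fin d) ℚ}

lemma stmt5_G_mul (hAB : A * B = B * A) (hAC : A * C = C * A) (hBC : B * C = C * B)
    (k l m k' l' m' : ℤ) :
    Stmt5G A B C k l m * Stmt5G A B C k' l' m' = Stmt5G A B C (k + k') (l + l') (m + m') := by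
  have cAB : Commute A B := hAB
  have cAC : Commute A C := hAC
  have cBC : Commute B C := hBC
  unfold Stmt5G
  rw [zpow_add, zpow_add, zpow_add]
  rw [stmt5_mul_shuffle (A ^ k) (B ^ l) (C ^ m) (A ^ k') (B ^ l') (C ^ m')
    ((cAC.zpow_zpow k' m).symm.eq) ((cAB.zpow_zpow k' l).symm.eq)
    ((cBC.zpow_zpow l' m).symm.eq)]

lemma stmt5_G_zpow (hAB : A * B = B * A) (hAC : A * C = C * A) (hBC : B * C = C * B)
    (k l m z : ℤ) :
    (Stmt5G A B C k l m) ^ z = Stmt5G A B C (k * z) (l * z) (m * z) := by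
  have cAB : Commute A B := hAB
  have cAC : Commute A C := hAC
  have cBC : Commute B C := hBC
  unfold Stmt5G
  have c1 : Commute (A ^ k) (B ^ l) := cAB.zpow_zpow k l
  have c2 : Commute (A ^ k) (C ^ m) := cAC.zpow_zpow k m
  have c3 : Commute (B ^ l) (C ^ m) := cBC.zpow_zpow l m
  rw [mul_assoc, (c1.mul_right c2).mul_zpow, c3.mul_zpow]
  rw [← zpow_mul, ← zpow_mul, ← zpow_mul, mul_assoc]

lemma stmt5_G_pow (hAB : A * B = B * A) (hAC : A * C = C * A) (hBC : B * C = C * B)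
    (k l m : ℤ) (r : ℕ) :
    (Stmt5G A B C k l m) ^ r = Stmt5G A B C (k * r) (l * r) (m * r) := by
  rw [← zpow_natCast, stmt5_G_zpow hAB hAC hBC]

lemma stmt5_G_inv (hAB : A * B = B * A) (hAC : A * C = C * A) (hBC : B * C = C * B)
    (k l m : ℤ) :
    (Stmt5G A B C k l m)⁻¹ = Stmt5G A B C (-k) (-l) (-m) := by
  have := stmt5_G_zpow hAB hAC hBC k l m (-1)
  simpa using this



variable {d : ℕ} {A B C : GL (Fin d) ℚ}

lemma stmt5_content_mul (a k l m : ℤ) :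
    Int.gcd (Int.gcd (a*k) (a*l)) (a*m) = a.natAbs * Int.gcd (Int.gcd k l) m := by
  simp [Int.gcd, Int.natAbs_mul, Int.natAbs_abs, Nat.gcd_mul_left]

lemma stmt5_matErgodic_inv {T : GL (Fin d) ℚ} (h : MatErgodic T) : MatErgodic T⁻¹ := by
  intro r hr v hv
  apply h r hr v
  have hv' : Stmt5Fixv ((T ^ r)⁻¹) v := by rw [← inv_pow]; exact hv
  have := stmt5_fixv_inv hv'
  rwa [inv_inv] at this

lemma stmt5_keyB (hAB : A * B = B * A) (hAC : A * C = C * A) (hBC : B * C = C * B)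
    (herg : ∀ i j : ℤ, (i, j) ≠ (0, 0) → MatErgodic (A ^ i * B ^ j))
    (k l m k' l' m' : ℤ) (hm : 0 < m) (hm' : 0 < m')
    (hc : Int.gcd (Int.gcd k l) m = 1) (hc' : Int.gcd (Int.gcd k' l') m' = 1)
    (hne : (k, l, m) ≠ (k', l', m'))
    (r r' : ℕ) (hr : 1 ≤ r) (hr' : 1 ≤ r') (v : Fin d → ℚ)
    (hv : Stmt5Fixv (Stmt5G A B C (k*r) (l*r) (m*r)) v)
    (hv' : Stmt5Fixv (Stmt5G A B C (k'*r') (l'*r') (m'*r')) v) : v = 0 := by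
  have h1 : Stmt5Fixv (Stmt5G A B C (k*r*(r'*m')) (l*r*(r'*m')) (m*r*(r'*m'))) v := by
    rw [← stmt5_G_zpow hAB hAC hBC]; exact stmt5_fixv_zpow hv _
  have h2 : Stmt5Fixv (Stmt5G A B C (k'*r'*(-(r*m))) (l'*r'*(-(r*m))) (m'*r'*(-(r*m)))) v := by
    rw [← stmt5_G_zpow hAB hAC hBC]; exact stmt5_fixv_zpow hv' _
  have h3 : Stmt5Fixv (Stmt5G A B C (k*r*(r'*m') + k'*r'*(-(r*m))) (l*r*(r'*m') + l'*r'*(-(r*m)))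
      (m*r*(r'*m') + m'*r'*(-(r*m)))) v := by
    rw [← stmt5_G_mul hAB hAC hBC]; exact stmt5_fixv_mul h1 h2
  have hz : m*(r:ℤ)*((r':ℤ)*m') + m'*(r':ℤ)*(-((r:ℤ)*m)) = 0 := by ring
  rw [hz] at h3
  have hrr : ((r:ℤ)*(r':ℤ)) ≠ 0 := by
    have : (0:ℤ) < (r:ℤ) := by omega
    have : (0:ℤ) < (r':ℤ) := by omega
    positivity
  have hij : (k*(r:ℤ)*((r':ℤ)*m') + k'*(r':ℤ)*(-((r:ℤ)*m)),
      l*(r:ℤ)*((r':ℤ)*m') + l'*(r':ℤ)*(-((r:ℤ)*m))) ≠ ((0:ℤ), (0:ℤ)) := by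
    intro h0
    have hi0 : k*(r:ℤ)*((r':ℤ)*m') + k'*(r':ℤ)*(-((r:ℤ)*m)) = 0 := congrArg Prod.fst h0
    have hj0 : l*(r:ℤ)*((r':ℤ)*m') + l'*(r':ℤ)*(-((r:ℤ)*m)) = 0 := congrArg Prod.snd h0
    have e1 : k*m' = k'*m := by
      have h : ((r:ℤ)*(r':ℤ)) * (k*m' - k'*m) = 0 := by linear_combination hi0
      have := (mul_eq_zero.mp h).resolve_left hrr
      linarith [this]
    have e2 : l*m' = l'*m := by
      have h : ((r:ℤ)*(r':ℤ)) * (l*m' - l'*m) = 0 := by linear_combination hj0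
      have := (mul_eq_zero.mp h).resolve_left hrr
      linarith [this]
    have f1 : m'*k = m*k' := by linear_combination e1
    have f2 : m'*l = m*l' := by linear_combination e2
    have f3 : m'*m = m*m' := mul_comm _ _
    have hcontent : m'.natAbs * Int.gcd (Int.gcd k l) m
        = m.natAbs * Int.gcd (Int.gcd k' l') m' := by
      rw [← stmt5_content_mul, ← stmt5_content_mul, f1, f2, f3]
    rw [hc, hc'] at hcontent
    have hmm : m = m' := by omega
    subst hmm
    have hk : k = k' := by
      have := e1
      exact mul_right_cancel₀ hm.ne' this
    have hl : l = l' := mul_right_cancel₀ hm.ne' e2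
    exact hne (by rw [hk, hl])
  have herg' := herg _ _ hij
  apply herg' 1 le_rfl v
  rw [pow_one]
  have hG : Stmt5G A B C (k*(r:ℤ)*((r':ℤ)*m') + k'*(r':ℤ)*(-((r:ℤ)*m)))
      (l*(r:ℤ)*((r':ℤ)*m') + l'*(r':ℤ)*(-((r:ℤ)*m))) 0
      = A ^ (k*(r:ℤ)*((r':ℤ)*m') + k'*(r':ℤ)*(-((r:ℤ)*m)))
        * B ^ (l*(r:ℤ)*((r':ℤ)*m') + l'*(r':ℤ)*(-((r:ℤ)*m))) := by
    unfold Stmt5G; rw [zpow_zero, mul_one]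
  rw [← hG]
  exact h3



variable {d : ℕ} {A B C : GL (Fin d) ℚ}

lemma stmt5_G_comm (hAB : A * B = B * A) (hAC : A * C = C * A) (hBC : B * C = C * B)
    (x y z x' y' z' : ℤ) :
    Stmt5G A B C x y z * Stmt5G A B C x' y' z' = Stmt5G A B C x' y' z' * Stmt5G A B C x y z := by
  rw [stmt5_G_mul hAB hAC hBC, stmt5_G_mul hAB hAC hBC, add_comm x' x, add_comm y' y, add_comm z' z]


/-- Let `A, B, C ∈ GL(d, ℚ)` be commuting semisimple matrices, and suppose `A^i B^j` is
ergodic for all `(i, j) ≠ (0, 0)`. Then there are at most finitely many primitive integer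
triples `(k, l, m)` such that `A^k B^l C^m` is not ergodic. -/
theorem stmt5 {d : ℕ} (A B C : GL (Fin d) ℚ)
    (hAB : A * B = B * A) (hAC : A * C = C * A) (hBC : B * C = C * B)
    (hAs : Module.End.IsSemisimple (Matrix.toLin' (A : Matrix (Fin d) (Fin d) ℚ)))
    (hBs : Module.End.IsSemisimple (Matrix.toLin' (B : Matrix (Fin d) (Fin d) ℚ)))
    (hCs : Module.End.IsSemisimple (Matrix.toLin' (C : Matrix (Fin d) (Fin d) ℚ)))
    (herg : ∀ i j : ℤ, (i, j) ≠ (0, 0) → MatErgodic (A ^ i * B ^ j)) :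
    {t : ℤ × ℤ × ℤ | Int.gcd (Int.gcd t.1 t.2.1) t.2.2 = 1 ∧
      ¬ MatErgodic (A ^ t.1 * B ^ t.2.1 * C ^ t.2.2)}.Finite := by
  classical
  set S : Set (ℤ × ℤ × ℤ) := {t : ℤ × ℤ × ℤ | Int.gcd (Int.gcd t.1 t.2.1) t.2.2 = 1 ∧
      ¬ MatErgodic (A ^ t.1 * B ^ t.2.1 * C ^ t.2.2)} with hSdef
  by_contra hfin
  -- extract witnesses from non-ergodicity
  have hbadpow : ∀ k l m : ℤ, ¬ MatErgodic (A ^ k * B ^ l * C ^ m) →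
      ∃ r : ℕ, 1 ≤ r ∧ ∃ v : Fin d → ℚ,
        Stmt5Fixv (Stmt5G A B C (k * r) (l * r) (m * r)) v ∧ v ≠ 0 := by
    intro k l m hbad
    unfold MatErgodic at hbad
    push_neg at hbad
    obtain ⟨r, hr, v, hfix, hv⟩ := hbad
    refine ⟨r, hr, v, ?_, hv⟩
    rw [← stmt5_G_pow hAB hAC hBC]
    exact hfix
  -- third coordinate of a bad primitive triple is nonzero
  have hm_ne : ∀ k l m : ℤ, Int.gcd (Int.gcd k l) m = 1 →
      ¬ MatErgodic (A ^ k * B ^ l * C ^ m) → m ≠ 0 := by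
    intro k l m hc hbad hm0
    subst hm0
    obtain ⟨r, hr, v, hfix, hv⟩ := hbadpow k l 0 hbad
    rw [zero_mul] at hfix
    have hkl : ((k * (r:ℤ)), (l * (r:ℤ))) ≠ ((0:ℤ), (0:ℤ)) := by
      intro h0
      have h1 : k * (r:ℤ) = 0 := congrArg Prod.fst h0
      have h2 : l * (r:ℤ) = 0 := congrArg Prod.snd h0
      have hr0 : (r:ℤ) ≠ 0 := by omega
      have hk0 : k = 0 := by rcases mul_eq_zero.mp h1 with h | h; exact h; exact absurd h hr0
      have hl0 : l = 0 := by rcases mul_eq_zero.mp h2 with h | h; exact h; exact absurd h hr0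
      rw [hk0, hl0] at hc
      simp [Int.gcd] at hc
    apply hv
    apply herg _ _ hkl 1 le_rfl v
    rw [pow_one]
    have hG : Stmt5G A B C (k * (r:ℤ)) (l * (r:ℤ)) 0 = A ^ (k * (r:ℤ)) * B ^ (l * (r:ℤ)) := by
      unfold Stmt5G; rw [zpow_zero, mul_one]
    rw [← hG]
    exact hfix
  -- S is closed under negation
  have hneg : ∀ t : ℤ × ℤ × ℤ, t ∈ S → -t ∈ S := by
    rintro ⟨k, l, m⟩ ⟨h1, h2⟩
    refine ⟨?_, ?_⟩
    · show Int.gcd (Int.gcd (-k) (-l)) (-m) = 1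
      simpa [Int.gcd, Int.natAbs_neg] using h1
    · show ¬ MatErgodic (A ^ (-k) * B ^ (-l) * C ^ (-m))
      intro hErg
      apply h2
      have h3 : MatErgodic ((Stmt5G A B C (-k) (-l) (-m))⁻¹) := stmt5_matErgodic_inv hErg
      rw [stmt5_G_inv hAB hAC hBC] at h3
      simpa [Stmt5G] using h3
  -- flip the sign so that the third coordinate is positive
  set f : ℤ × ℤ × ℤ → ℤ × ℤ × ℤ := fun t => if t.2.2 < 0 then -t else t with hfdef
  have hf_mem : ∀ t ∈ S, f t ∈ S ∧ 0 < (f t).2.2 := by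
    intro t ht
    have hm := hm_ne t.1 t.2.1 t.2.2 ht.1 ht.2
    by_cases h : t.2.2 < 0
    · have : f t = -t := if_pos h
      rw [this]
      exact ⟨hneg t ht, by simp; omega⟩
    · have : f t = t := if_neg h
      rw [this]
      exact ⟨ht, by omega⟩
  have hinf : S.Infinite := hfin
  have hS'inf : (f '' S).Infinite := by
    intro hS'fin
    apply hfin
    have hsub : S ⊆ ⋃ y ∈ f '' S, ({y, -y} : Set (ℤ × ℤ × ℤ)) := by
      intro t ht
      refine Set.mem_biUnion (Set.mem_image_of_mem f ht) ?_
      by_cases h : t.2.2 < 0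
      · have : f t = -t := if_pos h
        rw [this]
        right
        simp
      · have : f t = t := if_neg h
        rw [this]
        left
        rfl
    exact Set.Finite.subset
      (Set.Finite.biUnion hS'fin (fun y _ => (Set.finite_singleton (-y)).insert y)) hsub
  obtain ⟨T, hTsub, hTcard⟩ := hS'inf.exists_subset_card_eq (d + 1)
  set τ : Fin (d + 1) → ℤ × ℤ × ℤ := fun i => ((T.equivFinOfCardEq hTcard).symm i : ℤ × ℤ × ℤ)
    with hτdef
  have hτinj : Function.Injective τ := by
    intro i j hij
    have := Subtype.val_injective hij
    exact (T.equivFinOfCardEq hTcard).symm.injective this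
  have hτmem : ∀ i, τ i ∈ S ∧ 0 < (τ i).2.2 := by
    intro i
    have h1 : τ i ∈ f '' S := hTsub ((T.equivFinOfCardEq hTcard).symm i).2
    obtain ⟨t, ht, hft⟩ := h1
    rw [← hft]
    exact hf_mem t ht
  have hwit : ∀ i, ∃ r : ℕ, 1 ≤ r ∧ ∃ v : Fin d → ℚ,
      Stmt5Fixv (Stmt5G A B C ((τ i).1 * r) ((τ i).2.1 * r) ((τ i).2.2 * r)) v ∧ v ≠ 0 :=
    fun i => hbadpow _ _ _ (hτmem i).1.2
  choose r hr w hw hwne using hwit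
  set h : Fin (d + 1) → GL (Fin d) ℚ :=
    fun i => Stmt5G A B C ((τ i).1 * (r i)) ((τ i).2.1 * (r i)) ((τ i).2.2 * (r i)) with hhdef
  have hcomm : ∀ i j, h i * h j = h j * h i := fun i j => stmt5_G_comm hAB hAC hBC _ _ _ _ _ _
  have hpair : ∀ i j, i ≠ j → ∀ u : Fin d → ℚ, Stmt5Fixv (h i) u → Stmt5Fixv (h j) u → u = 0 := by
    intro i j hij u hu1 hu2
    refine stmt5_keyB hAB hAC hBC herg (τ i).1 (τ i).2.1 (τ i).2.2 (τ j).1 (τ j).2.1 (τ j).2.2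
      (hτmem i).2 (hτmem j).2 (hτmem i).1.1 (hτmem j).1.1 ?_ (r i) (r j) (hr i) (hr j)
      u hu1 hu2
    intro he
    apply hij
    apply hτinj
    have h1 : (τ i).1 = (τ j).1 := congrArg Prod.fst he
    have h2 : (τ i).2.1 = (τ j).2.1 := congrArg (fun p => p.2.1) he
    have h3 : (τ i).2.2 = (τ j).2.2 := congrArg (fun p => p.2.2) he
    exact Prod.ext h1 (Prod.ext h2 h3)
  -- the main induction: fixed spaces are independent
  have main : ∀ s : Finset (Fin (d + 1)), ∀ i₀, i₀ ∉ s → ∀ u : Fin d → ℚ, Stmt5Fixv (h i₀) u →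
      (∃ ww : Fin (d + 1) → (Fin d → ℚ), (∀ i ∈ s, Stmt5Fixv (h i) (ww i)) ∧ u = ∑ i ∈ s, ww i) →
      u = 0 := by
    intro s
    induction s using Finset.induction_on with
    | empty =>
      intro i₀ _ u _ hdec
      obtain ⟨ww, _, hsum⟩ := hdec
      simpa using hsum
    | @insert i₁ s' hi₁ ih =>
      intro i₀ hi₀ u hu hdec
      obtain ⟨ww, hwfix, hsum⟩ := hdec
      have hne01 : i₀ ≠ i₁ := by
        intro hcon; exact hi₀ (hcon ▸ Finset.mem_insert_self i₁ s')
      have hi₀s' : i₀ ∉ s' := fun hcon => hi₀ (Finset.mem_insert_of_mem hcon)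
      let M : Matrix (Fin d) (Fin d) ℚ := ((h i₁ : GL (Fin d) ℚ) : Matrix (Fin d) (Fin d) ℚ)
      let F : (Fin d → ℚ) →ₗ[ℚ] (Fin d → ℚ) := M.mulVecLin - LinearMap.id
      have hF : ∀ x, F x = M.mulVec x - x := fun x => rfl
      have hinvar : ∀ j x, Stmt5Fixv (h j) x → Stmt5Fixv (h j) (F x) := by
        intro j x hx
        have hMN : ((h j : GL (Fin d) ℚ) : Matrix (Fin d) (Fin d) ℚ) * M
            = M * ((h j : GL (Fin d) ℚ) : Matrix (Fin d) (Fin d) ℚ) := by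
          show ((h j : GL (Fin d) ℚ) : Matrix (Fin d) (Fin d) ℚ)
              * ((h i₁ : GL (Fin d) ℚ) : Matrix (Fin d) (Fin d) ℚ) = _
          rw [← Units.val_mul, ← Units.val_mul, hcomm j i₁]
        have hx' : ((h j : GL (Fin d) ℚ) : Matrix (Fin d) (Fin d) ℚ).mulVec x = x := hx
        show ((h j : GL (Fin d) ℚ) : Matrix (Fin d) (Fin d) ℚ).mulVec (F x) = F x
        rw [hF, Matrix.mulVec_sub, hx', Matrix.mulVec_mulVec, hMN,
          ← Matrix.mulVec_mulVec, hx']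
      have hw1 : F (ww i₁) = 0 := by
        have hfix := hwfix i₁ (Finset.mem_insert_self _ _)
        have hfix' : M.mulVec (ww i₁) = ww i₁ := hfix
        rw [hF, hfix', sub_self]
      have hFu : F u = ∑ i ∈ s', F (ww i) := by
        rw [hsum, Finset.sum_insert hi₁, map_add, hw1, zero_add, map_sum]
      have hFu0 : F u = 0 := by
        apply ih i₀ hi₀s' (F u) (hinvar i₀ u hu)
        exact ⟨fun i => F (ww i),
          fun i hi => hinvar i (ww i) (hwfix i (Finset.mem_insert_of_mem hi)), hFu⟩
      have hfix1 : Stmt5Fixv (h i₁) u := by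
        show M.mulVec u = u
        have : M.mulVec u - u = 0 := by rw [← hF]; exact hFu0
        exact sub_eq_zero.mp this
      exact hpair i₀ i₁ hne01 u hu hfix1
  -- linear independence of the fixed vectors
  have hli : LinearIndependent ℚ w := by
    rw [Fintype.linearIndependent_iff]
    intro c hc i₀
    have hfix0 : Stmt5Fixv (h i₀) (c i₀ • w i₀) := stmt5_fixv_smul (hw i₀) _
    have hdec : c i₀ • w i₀ = ∑ i ∈ Finset.univ.erase i₀, (-(c i)) • w i := by
      have h1 : c i₀ • w i₀ + ∑ i ∈ Finset.univ.erase i₀, c i • w i = 0 := by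
        rw [Finset.add_sum_erase Finset.univ (fun i => c i • w i) (Finset.mem_univ i₀)]
        exact hc
      have h2 := eq_neg_of_add_eq_zero_left h1
      rw [h2, ← Finset.sum_neg_distrib]
      exact Finset.sum_congr rfl (fun i _ => by rw [neg_smul])
    have hz := main (Finset.univ.erase i₀) i₀ (Finset.notMem_erase _ _) _ hfix0
      ⟨fun i => (-(c i)) • w i, fun i _ => stmt5_fixv_smul (hw i) _, hdec⟩
    rcases smul_eq_zero.mp hz with h0 | h0
    · exact h0
    · exact absurd h0 (hwne i₀)
  have hcard := hli.fintype_card_le_finrank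
  rw [Module.finrank_fin_fun, Fintype.card_fin] at hcard
  omega
end
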